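/- arXiv:2303.01326 — 3 statements merged into one kernel-verified Lean document; each statement's English description precedes it below -/
import Mathlib

section
/- Let p ≥ 1 and let Θ₀ be a symmetric positive definite p×p real matrix whose eigenvalues satisfy 1/L ≤ Λ_min(Θ₀) ≤ Λ_max(Θ₀) ≤ L for some constant L ≥ 1, and set Σ₀ = Θ₀⁻¹. Then for every symmetric p×p real matrix Δ with ‖Δ‖_F ≤ 1/(2L), the matrix Δ + Θ₀ is positive definite, the quantity f(Δ) := tr(Δ Σ₀) − [log det(Δ + Θ₀) − log det(Θ₀)] is well defined, and f(Δ) ≥ ‖Δ‖_F² / (2(L + 1/(2L))²). -/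
open Matrix
open scoped BigOperators Classical

noncomputable section

/-- Frobenius norm squared: `‖A‖_F² = Σ_{i,j} A_{ij}²`. -/
def frobSq {p : ℕ} (A : Matrix (Fin p) (Fin p) ℝ) : ℝ := ∑ i, ∑ j, (A i j) ^ 2

/-- Frobenius norm `‖A‖_F = (Σ_{i,j} A_{ij}²)^{1/2}`. -/
def frobNorm {p : ℕ} (A : Matrix (Fin p) (Fin p) ℝ) : ℝ := Real.sqrt (frobSq A)

/-- Entrywise ℓ₁ norm `‖A‖₁ = Σ_{i,j} |A_{ij}|`. -/
def l1Norm {p : ℕ} (A : Matrix (Fin p) (Fin p) ℝ) : ℝ := ∑ i, ∑ j, |A i j|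

/-- Entrywise supremum norm `‖A‖_∞ = max_{i,j} |A_{ij}|`. -/
def supNorm {p : ℕ} (A : Matrix (Fin p) (Fin p) ℝ) : ℝ := ⨆ i, ⨆ j, |A i j|

/-- ℓ₁-operator norm `|||A|||₁ = max_j Σ_i |A_{ij}|`. -/
def opNorm1 {p : ℕ} (A : Matrix (Fin p) (Fin p) ℝ) : ℝ := ⨆ j, ∑ i, |A i j|

/-- `A⁺`: the diagonal matrix with the same diagonal as `A`. -/
def diagPart {p : ℕ} (A : Matrix (Fin p) (Fin p) ℝ) : Matrix (Fin p) (Fin p) ℝ :=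
  Matrix.diagonal (fun i => A i i)

/-- `A⁻ = A − A⁺`: the off-diagonal part of `A`. -/
def offDiagPart {p : ℕ} (A : Matrix (Fin p) (Fin p) ℝ) : Matrix (Fin p) (Fin p) ℝ :=
  A - diagPart A

/-- Number of off-diagonal nonzero entries of `A`:
`s = #{(i,j) : i ≠ j, A_{ij} ≠ 0}`. -/
def sparsity {p : ℕ} (A : Matrix (Fin p) (Fin p) ℝ) : ℕ :=
  (Finset.univ.filter (fun ij : Fin p × Fin p => ij.1 ≠ ij.2 ∧ A ij.1 ij.2 ≠ 0)).card

/-- Fused graphical lasso objective for `K` groups: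
`F(Θ₁,…,Θ_K) = Σ_k [tr(Σ̂⁽ᵏ⁾Θ_k) − log det Θ_k] + λ Σ_k ‖Θ_k⁻‖₁
  + ρ Σ_{k<k'} ‖Θ_k⁻ − Θ_{k'}⁻‖₁`. -/
def objFGL {p K : ℕ} (S : Fin K → Matrix (Fin p) (Fin p) ℝ) (lam rho : ℝ)
    (Θ : Fin K → Matrix (Fin p) (Fin p) ℝ) : ℝ :=
  ∑ k, (Matrix.trace (S k * Θ k) - Real.log (Θ k).det)
    + lam * ∑ k, l1Norm (offDiagPart (Θ k))
    + rho * ∑ k, ∑ k', if k < k' then l1Norm (offDiagPart (Θ k) - offDiagPart (Θ k')) else 0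

/-! ### Auxiliary lemmas -/

section MyAuxAlgebra

variable {p : ℕ}

lemma myFrobSq_nonneg (A : Matrix (Fin p) (Fin p) ℝ) : 0 ≤ frobSq A := by
  apply Finset.sum_nonneg; intro i _; apply Finset.sum_nonneg; intro j _; positivity

lemma myDot_self_nonneg (x : Fin p → ℝ) : 0 ≤ x ⬝ᵥ x :=
  Finset.sum_nonneg fun i _ => mul_self_nonneg _

lemma myQuad_abs (A : Matrix (Fin p) (Fin p) ℝ) (x : Fin p → ℝ) :
    |x ⬝ᵥ (A *ᵥ x)| ≤ frobNorm A * (x ⬝ᵥ x) := by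
  have h1 : (x ⬝ᵥ (A *ᵥ x)) = ∑ ij : Fin p × Fin p, A ij.1 ij.2 * (x ij.1 * x ij.2) := by
    rw [Fintype.sum_prod_type]
    simp only [dotProduct, mulVec, dotProduct, Finset.mul_sum]
    apply Finset.sum_congr rfl; intro i _
    apply Finset.sum_congr rfl; intro j _
    ring
  have h2 := Finset.sum_mul_sq_le_sq_mul_sq Finset.univ
      (fun ij : Fin p × Fin p => A ij.1 ij.2) (fun ij => x ij.1 * x ij.2)
  have h3 : ∑ ij : Fin p × Fin p, (A ij.1 ij.2) ^ 2 = frobSq A := by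
    rw [frobSq, Fintype.sum_prod_type]
  have h4 : ∑ ij : Fin p × Fin p, (x ij.1 * x ij.2) ^ 2 = (x ⬝ᵥ x) ^ 2 := by
    rw [dotProduct, Fintype.sum_prod_type, sq, Finset.sum_mul_sum]
    apply Finset.sum_congr rfl; intro i _;
    apply Finset.sum_congr rfl; intro j _; ring
  have h5 : (x ⬝ᵥ (A *ᵥ x))^2 ≤ frobSq A * (x ⬝ᵥ x)^2 := by
    rw [h1]; rw [h3, h4] at h2; exact h2
  have h6 : |x ⬝ᵥ (A *ᵥ x)| = Real.sqrt ((x ⬝ᵥ (A *ᵥ x))^2) := (Real.sqrt_sq_eq_abs _).symm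
  rw [h6]
  calc Real.sqrt ((x ⬝ᵥ (A *ᵥ x))^2) ≤ Real.sqrt (frobSq A * (x ⬝ᵥ x)^2) := Real.sqrt_le_sqrt h5
    _ = frobNorm A * (x ⬝ᵥ x) := by
        rw [Real.sqrt_mul (myFrobSq_nonneg A), Real.sqrt_sq (myDot_self_nonneg x)]; rfl

lemma myStarMV (U : Matrix (Fin p) (Fin p) ℝ) (x w : Fin p → ℝ) :
    x ⬝ᵥ (U *ᵥ w) = (star U *ᵥ x) ⬝ᵥ w := by
  rw [dotProduct_mulVec x U]
  congr 1
  rw [Matrix.star_eq_conjTranspose, conjTranspose_eq_transpose_of_trivial, mulVec_transpose]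

lemma mySpectral_quad {A : Matrix (Fin p) (Fin p) ℝ} (hA : A.IsHermitian) (x : Fin p → ℝ) :
    ∃ y : Fin p → ℝ, x ⬝ᵥ (A *ᵥ x) = ∑ i, hA.eigenvalues i * (y i)^2 ∧ x ⬝ᵥ x = ∑ i, (y i)^2 := by
  have hU := hA.eigenvectorUnitary.2
  set U : Matrix (Fin p) (Fin p) ℝ := (hA.eigenvectorUnitary : Matrix (Fin p) (Fin p) ℝ) with hUdef
  have hSU : U * star U = 1 := (Unitary.mem_iff.mp hU).2
  refine ⟨star U *ᵥ x, ?_, ?_⟩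
  · have hspec : A = U * diagonal hA.eigenvalues * star U := by
      have := hA.spectral_theorem
      rwa [RCLike.ofReal_real_eq_id, Function.id_comp] at this
    conv_lhs => rw [hspec]
    rw [← mulVec_mulVec, ← mulVec_mulVec, myStarMV]
    simp only [dotProduct, mulVec_diagonal]
    apply Finset.sum_congr rfl; intros; ring
  · conv_lhs => rw [show x ⬝ᵥ x = x ⬝ᵥ ((U * star U) *ᵥ x) by rw [hSU, one_mulVec]]
    rw [← mulVec_mulVec, myStarMV]
    simp only [dotProduct]
    apply Finset.sum_congr rfl; intros; ring

lemma myQuad_le {A : Matrix (Fin p) (Fin p) ℝ} (hA : A.IsHermitian) {b : ℝ}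
    (hb : ∀ i, hA.eigenvalues i ≤ b) (x : Fin p → ℝ) : x ⬝ᵥ (A *ᵥ x) ≤ b * (x ⬝ᵥ x) := by
  obtain ⟨y, h1, h2⟩ := mySpectral_quad hA x
  rw [h1, h2, Finset.mul_sum]
  exact Finset.sum_le_sum fun i _ => mul_le_mul_of_nonneg_right (hb i) (sq_nonneg _)

lemma myQuad_ge {A : Matrix (Fin p) (Fin p) ℝ} (hA : A.IsHermitian) {a : ℝ}
    (ha : ∀ i, a ≤ hA.eigenvalues i) (x : Fin p → ℝ) : a * (x ⬝ᵥ x) ≤ x ⬝ᵥ (A *ᵥ x) := by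
  obtain ⟨y, h1, h2⟩ := mySpectral_quad hA x
  rw [h1, h2, Finset.mul_sum]
  exact Finset.sum_le_sum fun i _ => mul_le_mul_of_nonneg_right (ha i) (sq_nonneg _)

lemma myEig_ge {A : Matrix (Fin p) (Fin p) ℝ} (hA : A.IsHermitian) {c : ℝ}
    (h : ∀ x, c * (x ⬝ᵥ x) ≤ x ⬝ᵥ (A *ᵥ x)) (i : Fin p) : c ≤ hA.eigenvalues i := by
  have hAv : A *ᵥ ⇑(hA.eigenvectorBasis i) = hA.eigenvalues i • ⇑(hA.eigenvectorBasis i) :=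
    hA.mulVec_eigenvectorBasis i
  have hnorm : (⇑(hA.eigenvectorBasis i) : Fin p → ℝ) ⬝ᵥ ⇑(hA.eigenvectorBasis i) = 1 := by
    have h1 : (inner ℝ (hA.eigenvectorBasis i) (hA.eigenvectorBasis i) : ℝ) = 1 := by
      rw [real_inner_self_eq_norm_sq, hA.eigenvectorBasis.orthonormal.1 i]; norm_num
    rw [← h1, PiLp.inner_apply]
    simp [dotProduct, RCLike.inner_apply, conj_trivial, sq]
  have h2 := h ⇑(hA.eigenvectorBasis i)
  rw [hAv, dotProduct_smul, smul_eq_mul, hnorm, mul_one] at h2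
  linarith

lemma myDotself_pos {x : Fin p → ℝ} (hx : x ≠ 0) : 0 < x ⬝ᵥ x := by
  rcases Function.ne_iff.mp hx with ⟨i, hi⟩
  have hi' : x i ≠ 0 := by simpa using hi
  have h1 : (0:ℝ) < x i * x i := mul_self_pos.mpr hi'
  exact Finset.sum_pos' (fun j _ => mul_self_nonneg _) ⟨i, Finset.mem_univ i, h1⟩

lemma mySymmQuad {Θ : Matrix (Fin p) (Fin p) ℝ} (hΘ : Θ.IsHermitian) (a b : Fin p → ℝ) :
    a ⬝ᵥ (Θ *ᵥ b) = b ⬝ᵥ (Θ *ᵥ a) := by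
  have hT : Θᵀ = Θ := by
    have := hΘ.eq
    rwa [conjTranspose_eq_transpose_of_trivial] at this
  calc a ⬝ᵥ (Θ *ᵥ b) = (Θᵀ *ᵥ a) ⬝ᵥ b := by rw [dotProduct_mulVec a Θ, mulVec_transpose]
    _ = b ⬝ᵥ (Θ *ᵥ a) := by rw [hT, dotProduct_comm]

lemma myCS {Θ : Matrix (Fin p) (Fin p) ℝ} (hΘ : Θ.PosDef) (u v : Fin p → ℝ) :
    (u ⬝ᵥ (Θ *ᵥ v))^2 ≤ (u ⬝ᵥ (Θ *ᵥ u)) * (v ⬝ᵥ (Θ *ᵥ v)) := by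
  have hq : ∀ s : ℝ, 0 ≤ (v ⬝ᵥ (Θ *ᵥ v)) * (s * s) + (2 * (u ⬝ᵥ (Θ *ᵥ v))) * s
      + (u ⬝ᵥ (Θ *ᵥ u)) := by
    intro s
    have h0 : 0 ≤ (u + s • v) ⬝ᵥ (Θ *ᵥ (u + s • v)) := by
      have := hΘ.posSemidef.dotProduct_mulVec_nonneg (u + s • v)
      simpa using this
    have hexp : (u + s • v) ⬝ᵥ (Θ *ᵥ (u + s • v))
        = (v ⬝ᵥ (Θ *ᵥ v)) * (s * s) + (2 * (u ⬝ᵥ (Θ *ᵥ v))) * s + (u ⬝ᵥ (Θ *ᵥ u)) := by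
      rw [mulVec_add, dotProduct_add, add_dotProduct, add_dotProduct,
        mulVec_smul, dotProduct_smul, smul_dotProduct, smul_dotProduct,
        dotProduct_smul, mySymmQuad hΘ.1 v u]
      simp only [smul_eq_mul]
      ring
    rw [hexp] at h0; exact h0
  have hd := discrim_le_zero hq
  rw [discrim] at hd
  nlinarith [hd]

lemma myInvQuad_ge {Θ : Matrix (Fin p) (Fin p) ℝ} (hΘ : Θ.PosDef) {M : ℝ} (hM : 0 < M)
    (hub : ∀ x, x ⬝ᵥ (Θ *ᵥ x) ≤ M * (x ⬝ᵥ x)) (x : Fin p → ℝ) :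
    (1/M) * (x ⬝ᵥ x) ≤ x ⬝ᵥ (Θ⁻¹ *ᵥ x) := by
  by_cases hx : x = 0
  · simp [hx]
  · have hdet : IsUnit Θ.det := isUnit_iff_ne_zero.mpr (ne_of_gt hΘ.det_pos)
    have hinv : Θ *ᵥ (Θ⁻¹ *ᵥ x) = x := by
      rw [mulVec_mulVec, mul_nonsing_inv _ hdet, one_mulVec]
    have hCS := myCS hΘ x (Θ⁻¹ *ᵥ x)
    rw [hinv] at hCS
    rw [dotProduct_comm (Θ⁻¹ *ᵥ x) x] at hCS
    have h2 := hub x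
    have h3 : 0 < x ⬝ᵥ x := myDotself_pos hx
    have h5 : 0 < x ⬝ᵥ (Θ *ᵥ x) := by have := hΘ.dotProduct_mulVec_pos hx; simpa using this
    have h4 : 0 ≤ x ⬝ᵥ (Θ⁻¹ *ᵥ x) := by nlinarith
    rw [div_mul_eq_mul_div, one_mul, div_le_iff₀ hM]
    have h6 := mul_le_mul_of_nonneg_right h2 h4
    nlinarith [mul_pos h3 h3]

lemma myFrobSq_trace (A : Matrix (Fin p) (Fin p) ℝ) : frobSq A = Matrix.trace (Aᵀ * A) := by
  rw [Matrix.trace, frobSq, Finset.sum_comm]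
  apply Finset.sum_congr rfl; intro j _
  rw [Matrix.diag, Matrix.mul_apply]
  apply Finset.sum_congr rfl; intro i _
  rw [Matrix.transpose_apply, sq]

lemma myTrace_ge {S Δ : Matrix (Fin p) (Fin p) ℝ} (hS : S.IsHermitian) (hΔ : Δ.IsSymm)
    {c : ℝ} (hc0 : 0 ≤ c) (hc : ∀ i, c ≤ hS.eigenvalues i) :
    c^2 * frobSq Δ ≤ Matrix.trace (S * Δ * (S * Δ)) := by
  have hU := hS.eigenvectorUnitary.2
  set U : Matrix (Fin p) (Fin p) ℝ := (hS.eigenvectorUnitary : Matrix (Fin p) (Fin p) ℝ) with hUdef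
  have hUS : star U * U = 1 := (Unitary.mem_iff.mp hU).1
  have hSU : U * star U = 1 := (Unitary.mem_iff.mp hU).2
  set d : Fin p → ℝ := hS.eigenvalues with hd
  set D : Matrix (Fin p) (Fin p) ℝ := diagonal d with hD
  have hspec : S = U * D * star U := by
    have := hS.spectral_theorem
    rwa [RCLike.ofReal_real_eq_id, Function.id_comp] at this
  set E : Matrix (Fin p) (Fin p) ℝ := star U * Δ * U with hE
  have hstarU : star U = Uᵀ := by
    rw [Matrix.star_eq_conjTranspose, conjTranspose_eq_transpose_of_trivial]
  have hEsymm : Eᵀ = E := by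
    rw [hE, Matrix.transpose_mul, Matrix.transpose_mul, hstarU, Matrix.transpose_transpose,
      hΔ.eq]
    rw [Matrix.mul_assoc]
  have h2 : S * Δ * (S * Δ) = U * (D * E * (D * E)) * star U := by
    rw [hspec, hE]
    simp only [Matrix.mul_assoc]
    rw [hSU, Matrix.mul_one]
  have h3 : Matrix.trace (S * Δ * (S * Δ)) = Matrix.trace (D * E * (D * E)) := by
    rw [h2, Matrix.trace_mul_cycle, ← Matrix.mul_assoc, hUS, Matrix.one_mul]
  rw [h3]
  have h4 : Matrix.trace (D * E * (D * E)) = ∑ i, ∑ j, d i * d j * (E i j)^2 := by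
    rw [Matrix.trace]
    apply Finset.sum_congr rfl; intro i _
    rw [Matrix.diag, Matrix.mul_apply]
    apply Finset.sum_congr rfl; intro j _
    rw [hD, Matrix.diagonal_mul, Matrix.diagonal_mul]
    have : E j i = E i j := by conv_lhs => rw [← hEsymm, Matrix.transpose_apply]
    rw [this]; ring
  rw [h4]
  have h5 : frobSq Δ = ∑ i, ∑ j, (E i j)^2 := by
    have hEE : Matrix.trace (Eᵀ * E) = Matrix.trace (Δᵀ * Δ) := by
      rw [hEsymm, hE]
      rw [show star U * Δ * U * (star U * Δ * U) = star U * (Δ * (U * star U) * Δ) * U by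
        simp only [Matrix.mul_assoc], hSU, Matrix.mul_one]
      rw [Matrix.trace_mul_cycle, hSU, Matrix.one_mul, hΔ.eq]
    rw [myFrobSq_trace, hEE.symm, ← myFrobSq_trace]
    rfl
  rw [h5, Finset.mul_sum]
  apply Finset.sum_le_sum; intro i _
  rw [Finset.mul_sum]
  apply Finset.sum_le_sum; intro j _
  have hi := hc i; have hj := hc j
  have hdj : (0:ℝ) ≤ d j := le_trans hc0 hj
  have hsq : c^2 ≤ d i * d j := by nlinarith
  exact mul_le_mul_of_nonneg_right hsq (sq_nonneg _)

end MyAuxAlgebra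

section MyAuxCalc

variable {p : ℕ}

attribute [local instance] Matrix.linftyOpNormedRing Matrix.linftyOpNormedAlgebra

lemma myLine_hasDeriv (Θ₀ Δ : Matrix (Fin p) (Fin p) ℝ) (s : ℝ) :
    HasDerivAt (fun t : ℝ => Θ₀ + t • Δ) Δ s := by
  have h := ((hasDerivAt_id s).smul_const Δ).const_add Θ₀
  simp only [id, one_smul] at h
  exact h

lemma myDet_hasDeriv (Θ₀ Δ : Matrix (Fin p) (Fin p) ℝ) (s : ℝ)
    (hs : IsUnit (Θ₀ + s • Δ).det) :
    HasDerivAt (fun t : ℝ => (Θ₀ + t • Δ).det)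
      ((Θ₀ + s • Δ).det * Matrix.trace ((Θ₀ + s • Δ)⁻¹ * Δ)) s := by
  set A : Matrix (Fin p) (Fin p) ℝ := Θ₀ + s • Δ with hA
  set Cm : Matrix (Fin p) (Fin p) ℝ := A⁻¹ * Δ with hCm
  set Q : Polynomial ℝ :=
    (Matrix.det (1 + (Polynomial.X : Polynomial ℝ) • Cm.map Polynomial.C)).divX.divX with hQ
  have heq : ∀ t : ℝ, (Θ₀ + t • Δ).det
      = A.det * (1 + Matrix.trace Cm * (t - s) + Q.eval (t - s) * (t - s)^2) := by
    intro t
    have h1 : Θ₀ + t • Δ = A * (1 + (t - s) • Cm) := by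
      rw [Matrix.mul_add, Matrix.mul_one, Matrix.mul_smul, hCm, ← Matrix.mul_assoc,
        mul_nonsing_inv _ hs, Matrix.one_mul, hA]
      module
    rw [h1, Matrix.det_mul, Matrix.det_one_add_smul, hQ]
  have h1 : HasDerivAt (fun t : ℝ => t - s) 1 s := by
    simpa using (hasDerivAt_id s).sub_const s
  have h2 : HasDerivAt (fun t : ℝ => Q.eval (t - s)) (Q.derivative.eval 0 * 1) s := by
    have := HasDerivAt.comp (h := fun t : ℝ => t - s) (h₂ := fun y => Q.eval y)
      (x := s) (h₂' := Q.derivative.eval (s - s)) (h' := 1) (Q.hasDerivAt (s - s)) h1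
    simpa [Function.comp_def] using this
  have h3 : HasDerivAt (fun t : ℝ => (t - s)^2) ((2:ℕ) * (s - s)^1 * 1) s := h1.pow 2
  have h4 := ((h1.const_mul (Matrix.trace Cm)).const_add 1).add (h2.mul h3)
  have h5 := h4.const_mul A.det
  have hF : HasDerivAt
      (fun t : ℝ => A.det * (1 + Matrix.trace Cm * (t - s) + Q.eval (t - s) * (t - s)^2))
      (A.det * Matrix.trace Cm) s := by
    refine h5.congr_deriv ?_
    simp
  have hfun : (fun t : ℝ => (Θ₀ + t • Δ).det)
      = fun t => A.det * (1 + Matrix.trace Cm * (t - s) + Q.eval (t - s) * (t - s)^2) :=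
    funext heq
  rw [hfun]
  exact hF

lemma myLogDet_hasDeriv (Θ₀ Δ : Matrix (Fin p) (Fin p) ℝ) (s : ℝ)
    (hs : (Θ₀ + s • Δ).det ≠ 0) :
    HasDerivAt (fun t : ℝ => Real.log (Θ₀ + t • Δ).det)
      (Matrix.trace ((Θ₀ + s • Δ)⁻¹ * Δ)) s := by
  have h1 := HasDerivAt.comp (h := fun t : ℝ => (Θ₀ + t • Δ).det)
    (h₂ := Real.log) (x := s) (h₂' := ((Θ₀ + s • Δ).det)⁻¹)
    (h' := (Θ₀ + s • Δ).det * Matrix.trace ((Θ₀ + s • Δ)⁻¹ * Δ))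
    (Real.hasDerivAt_log hs) (myDet_hasDeriv Θ₀ Δ s (isUnit_iff_ne_zero.mpr hs))
  refine h1.congr_deriv ?_
  rw [← mul_assoc, inv_mul_cancel₀ hs, one_mul]

lemma myTraceInv_hasDeriv (Θ₀ Δ : Matrix (Fin p) (Fin p) ℝ) (s : ℝ)
    (hs : IsUnit (Θ₀ + s • Δ).det) :
    HasDerivAt (fun t : ℝ => Matrix.trace (Ring.inverse (Θ₀ + t • Δ) * Δ))
      (-Matrix.trace ((Θ₀ + s • Δ)⁻¹ * Δ * ((Θ₀ + s • Δ)⁻¹ * Δ))) s := by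
  haveI : Invertible (Θ₀ + s • Δ) := (Θ₀ + s • Δ).invertibleOfIsUnitDet hs
  set u : (Matrix (Fin p) (Fin p) ℝ)ˣ := unitOfInvertible (Θ₀ + s • Δ) with hu
  have hcoeinv : (↑u⁻¹ : Matrix (Fin p) (Fin p) ℝ) = (Θ₀ + s • Δ)⁻¹ := by
    simp [hu, invOf_eq_nonsing_inv]
  have hinv' : HasFDerivAt Ring.inverse
      (-ContinuousLinearMap.mulLeftRight ℝ _ ((Θ₀ + s • Δ)⁻¹) ((Θ₀ + s • Δ)⁻¹))
      (Θ₀ + s • Δ) := by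
    have := hasFDerivAt_ringInverse (𝕜 := ℝ) u
    rwa [hcoeinv] at this
  have hline := myLine_hasDeriv Θ₀ Δ s
  have hcomp : HasDerivAt (fun t : ℝ => Ring.inverse (Θ₀ + t • Δ))
      (-((Θ₀ + s • Δ)⁻¹ * Δ * (Θ₀ + s • Δ)⁻¹)) s := by
    have h0 : HasDerivAt (fun t : ℝ => Ring.inverse (Θ₀ + t • Δ))
        ((-ContinuousLinearMap.mulLeftRight ℝ _ ((Θ₀ + s • Δ)⁻¹) ((Θ₀ + s • Δ)⁻¹)) Δ) s :=
      HasFDerivAt.comp_hasDerivAt (l := Ring.inverse) (f := fun t : ℝ => Θ₀ + t • Δ) s hinv' hline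
    simpa [ContinuousLinearMap.mulLeftRight_apply] using h0
  set ltr : Matrix (Fin p) (Fin p) ℝ →L[ℝ] ℝ :=
    LinearMap.toContinuousLinearMap
      ((Matrix.traceLinearMap (Fin p) ℝ ℝ).comp (LinearMap.mulRight ℝ Δ)) with hltr
  have hfin : HasDerivAt (fun t : ℝ => ltr (Ring.inverse (Θ₀ + t • Δ)))
      (ltr (-((Θ₀ + s • Δ)⁻¹ * Δ * (Θ₀ + s • Δ)⁻¹))) s :=
    ltr.hasFDerivAt.comp_hasDerivAt s hcomp
  have hval : ltr (-((Θ₀ + s • Δ)⁻¹ * Δ * (Θ₀ + s • Δ)⁻¹))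
      = -Matrix.trace ((Θ₀ + s • Δ)⁻¹ * Δ * ((Θ₀ + s • Δ)⁻¹ * Δ)) := by
    rw [map_neg]
    congr 1
    show Matrix.trace ((Θ₀ + s • Δ)⁻¹ * Δ * (Θ₀ + s • Δ)⁻¹ * Δ) = _
    rw [Matrix.mul_assoc]
  rw [hval] at hfin
  exact hfin

end MyAuxCalc

/-- For a symmetric positive definite `Θ₀` with eigenvalues in `[1/L, L]`
(`L ≥ 1`), `Σ₀ = Θ₀⁻¹`, and any symmetric `Δ` with `‖Δ‖_F ≤ 1/(2L)`, the matrix `Δ + Θ₀`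
is positive definite (so `f(Δ) = tr(ΔΣ₀) − [log det(Δ+Θ₀) − log det Θ₀]` is well defined)
and `f(Δ) ≥ ‖Δ‖_F² / (2(L + 1/(2L))²)`. -/
theorem lemma_basic_quadratic_lower_bound
    (p : ℕ) (hp : 1 ≤ p) (L : ℝ) (hL : 1 ≤ L)
    (Θ₀ : Matrix (Fin p) (Fin p) ℝ) (hΘ₀ : Θ₀.PosDef)
    (heig : ∀ i, 1 / L ≤ hΘ₀.1.eigenvalues i ∧ hΘ₀.1.eigenvalues i ≤ L)
    (Δ : Matrix (Fin p) (Fin p) ℝ) (hΔ : Δ.IsSymm)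
    (hΔF : frobNorm Δ ≤ 1 / (2 * L)) :
    (Δ + Θ₀).PosDef ∧
      Matrix.trace (Δ * Θ₀⁻¹) - (Real.log (Δ + Θ₀).det - Real.log Θ₀.det)
        ≥ frobSq Δ / (2 * (L + 1 / (2 * L)) ^ 2) := by
  have hL0 : (0:ℝ) < L := lt_of_lt_of_le one_pos hL
  have hfN0 : 0 ≤ frobNorm Δ := Real.sqrt_nonneg _
  set M : ℝ := L + 1 / (2 * L) with hMdef
  have hM0 : 0 < M := by positivity
  -- Hermitian facts
  have hΔH : Δ.IsHermitian := by
    rw [Matrix.IsHermitian, conjTranspose_eq_transpose_of_trivial]; exact hΔ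
  have hTH : ∀ t : ℝ, (Θ₀ + t • Δ).IsHermitian := by
    intro t
    rw [Matrix.IsHermitian, conjTranspose_add, conjTranspose_smul, hΘ₀.1.eq, star_trivial,
      hΔH.eq]
  -- quadratic form bounds for Θ₀
  have hQ0lb := myQuad_ge hΘ₀.1 (fun i => (heig i).1)
  have hQ0ub := myQuad_le hΘ₀.1 (fun i => (heig i).2)
  -- positivity of Θ₀ + t Δ
  have hTpos : ∀ t : ℝ, |t| ≤ 3/2 → (Θ₀ + t • Δ).PosDef := by
    intro t ht
    refine Matrix.PosDef.of_dotProduct_mulVec_pos (hTH t) (fun x hx => ?_)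
    have hxx := myDotself_pos hx
    have hq := myQuad_abs Δ x
    have h1 : |t * (x ⬝ᵥ (Δ *ᵥ x))| ≤ (3/2) * (frobNorm Δ * (x ⬝ᵥ x)) := by
      rw [abs_mul]
      apply mul_le_mul ht hq (abs_nonneg _) (by norm_num)
    have h2 : t * (x ⬝ᵥ (Δ *ᵥ x)) ≥ -((3/2) * (frobNorm Δ * (x ⬝ᵥ x))) :=
      neg_le_of_abs_le h1
    have h3 : frobNorm Δ * (x ⬝ᵥ x) ≤ (1/(2*L)) * (x ⬝ᵥ x) :=
      mul_le_mul_of_nonneg_right hΔF (le_of_lt hxx)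
    have h4 := hQ0lb x
    have hLL : (1:ℝ)/L = 2 * (1/(2*L)) := by field_simp
    have hval : (0:ℝ) < x ⬝ᵥ ((Θ₀ + t • Δ) *ᵥ x) := by
      rw [add_mulVec, dotProduct_add, smul_mulVec, dotProduct_smul, smul_eq_mul]
      have h5 : (0:ℝ) < (1/(2*L)) * (x ⬝ᵥ x) := by positivity
      nlinarith
    simpa using hval
  -- upper bound on the quadratic form of Θ₀ + t Δ for t ∈ [0,1]
  have hTub : ∀ t : ℝ, 0 ≤ t → t ≤ 1 → ∀ x, x ⬝ᵥ ((Θ₀ + t • Δ) *ᵥ x) ≤ M * (x ⬝ᵥ x) := by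
    intro t ht0 ht1 x
    have hq := myQuad_abs Δ x
    have hxx := myDot_self_nonneg x
    have h3 : frobNorm Δ * (x ⬝ᵥ x) ≤ (1/(2*L)) * (x ⬝ᵥ x) :=
      mul_le_mul_of_nonneg_right hΔF hxx
    have habs : |t * (x ⬝ᵥ (Δ *ᵥ x))| ≤ 1 * (frobNorm Δ * (x ⬝ᵥ x)) := by
      rw [abs_mul]
      apply mul_le_mul (abs_le.mpr ⟨by linarith, ht1⟩) hq (abs_nonneg _) (by norm_num)
    have h2 : t * (x ⬝ᵥ (Δ *ᵥ x)) ≤ 1 * (frobNorm Δ * (x ⬝ᵥ x)) := le_of_abs_le habs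
    have h4 := hQ0ub x
    rw [add_mulVec, dotProduct_add, smul_mulVec, dotProduct_smul, smul_eq_mul, hMdef]
    nlinarith
  -- units
  have hdet_unit : ∀ t : ℝ, |t| ≤ 3/2 → IsUnit (Θ₀ + t • Δ).det := fun t ht =>
    isUnit_iff_ne_zero.mpr (ne_of_gt (hTpos t ht).det_pos)
  -- key second-derivative bound
  set K : ℝ := frobSq Δ / M^2 with hKdef
  have hKpos : ∀ t : ℝ, 0 ≤ t → t ≤ 1 →
      K ≤ Matrix.trace ((Θ₀ + t • Δ)⁻¹ * Δ * ((Θ₀ + t • Δ)⁻¹ * Δ)) := by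
    intro t ht0 ht1
    have hTt := hTpos t (by rw [abs_le]; constructor <;> linarith)
    have hSH : ((Θ₀ + t • Δ)⁻¹).IsHermitian := (hTt.1).inv
    have hSlb := myInvQuad_ge hTt hM0 (hTub t ht0 ht1)
    have heigS := myEig_ge hSH hSlb
    have := myTrace_ge hSH hΔ (by positivity : (0:ℝ) ≤ 1/M) heigS
    have harith : (1/M)^2 * frobSq Δ = K := by
      rw [hKdef]; field_simp
    linarith [harith ▸ this]
  -- the functions
  set c₀ : ℝ := Matrix.trace (Θ₀⁻¹ * Δ) with hc₀
  set g : ℝ → ℝ := fun t => Real.log (Θ₀ + t • Δ).det with hg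
  set φ : ℝ → ℝ := fun t => c₀ - Matrix.trace (Ring.inverse (Θ₀ + t • Δ) * Δ) - K * t with hφ
  set ψ : ℝ → ℝ := fun t => c₀ * t - (g t - g 0) - K * t^2 / 2 with hψ
  have hψ' : ∀ t : ℝ, |t| ≤ 3/2 → HasDerivAt ψ (φ t) t := by
    intro t ht
    have hgd := myLogDet_hasDeriv Θ₀ Δ t (isUnit_iff_ne_zero.mp (hdet_unit t ht))
    have h1 : HasDerivAt (fun s : ℝ => c₀ * s) (c₀ * 1) t := (hasDerivAt_id t).const_mul c₀
    have h2 : HasDerivAt (fun s : ℝ => g s - g 0) (Matrix.trace ((Θ₀ + t • Δ)⁻¹ * Δ)) t := by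
      simpa using hgd.sub_const (g 0)
    have h3 : HasDerivAt (fun s : ℝ => K * s^2 / 2) (K * ((2:ℕ) * t^1) / 2) t :=
      ((hasDerivAt_pow 2 t).const_mul K).div_const 2
    have h := (h1.sub h2).sub h3
    refine h.congr_deriv ?_
    rw [hφ]
    simp only []
    rw [Matrix.nonsing_inv_eq_ringInverse]
    push_cast
    ring
  have hφ' : ∀ t : ℝ, |t| ≤ 3/2 → HasDerivAt φ
      (Matrix.trace ((Θ₀ + t • Δ)⁻¹ * Δ * ((Θ₀ + t • Δ)⁻¹ * Δ)) - K) t := by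
    intro t ht
    have hti := myTraceInv_hasDeriv Θ₀ Δ t (hdet_unit t ht)
    have h1 : HasDerivAt (fun s : ℝ => c₀ - Matrix.trace (Ring.inverse (Θ₀ + s • Δ) * Δ))
        (Matrix.trace ((Θ₀ + t • Δ)⁻¹ * Δ * ((Θ₀ + t • Δ)⁻¹ * Δ))) t := by
      simpa using hti.const_sub c₀
    have h2 : HasDerivAt (fun s : ℝ => K * s) (K * 1) t := (hasDerivAt_id t).const_mul K
    have h := h1.sub h2
    refine h.congr_deriv ?_
    ring
  have hmemIcc : ∀ t : ℝ, t ∈ Set.Icc (0:ℝ) 1 → |t| ≤ 3/2 := by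
    intro t ht; rw [abs_le]; exact ⟨by linarith [ht.1], by linarith [ht.2]⟩
  have hmemIoo : ∀ t : ℝ, t ∈ Set.Ioo (0:ℝ) 1 → |t| ≤ 3/2 := by
    intro t ht; rw [abs_le]; exact ⟨by linarith [ht.1], by linarith [ht.2]⟩
  -- φ is monotone on [0,1], φ 0 = 0
  have hφmono : MonotoneOn φ (Set.Icc (0:ℝ) 1) := by
    apply monotoneOn_of_deriv_nonneg (convex_Icc 0 1)
    · intro t ht
      exact (hφ' t (hmemIcc t ht)).continuousAt.continuousWithinAt
    · intro t ht
      rw [interior_Icc] at ht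
      exact ((hφ' t (hmemIoo t ht)).differentiableAt).differentiableWithinAt
    · intro t ht
      rw [interior_Icc] at ht
      rw [(hφ' t (hmemIoo t ht)).deriv]
      have := hKpos t (le_of_lt ht.1) (le_of_lt ht.2)
      linarith
  have hφ0 : φ 0 = 0 := by
    rw [hφ]
    simp only []
    rw [show Θ₀ + (0:ℝ) • Δ = Θ₀ by rw [zero_smul, add_zero],
      ← Matrix.nonsing_inv_eq_ringInverse, hc₀]
    ring
  have hφnonneg : ∀ t : ℝ, t ∈ Set.Icc (0:ℝ) 1 → 0 ≤ φ t := by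
    intro t ht
    have := hφmono (Set.left_mem_Icc.mpr (by norm_num)) ht ht.1
    rw [hφ0] at this
    exact this
  -- ψ is monotone on [0,1], ψ 0 = 0, so ψ 1 ≥ 0
  have hψmono : MonotoneOn ψ (Set.Icc (0:ℝ) 1) := by
    apply monotoneOn_of_deriv_nonneg (convex_Icc 0 1)
    · intro t ht
      exact (hψ' t (hmemIcc t ht)).continuousAt.continuousWithinAt
    · intro t ht
      rw [interior_Icc] at ht
      exact ((hψ' t (hmemIoo t ht)).differentiableAt).differentiableWithinAt
    · intro t ht
      rw [interior_Icc] at ht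
      rw [(hψ' t (hmemIoo t ht)).deriv]
      exact hφnonneg t ⟨le_of_lt ht.1, le_of_lt ht.2⟩
  have hψ0 : ψ 0 = 0 := by rw [hψ]; simp
  have hψ1 : 0 ≤ ψ 1 := by
    have := hψmono (Set.left_mem_Icc.mpr (by norm_num))
      (Set.right_mem_Icc.mpr (by norm_num)) (by norm_num)
    rw [hψ0] at this
    exact this
  -- conclusion
  constructor
  · have := hTpos 1 (by norm_num)
    rwa [one_smul, add_comm] at this
  · have hg1 : g 1 = Real.log (Δ + Θ₀).det := by
      rw [hg]; simp only []; rw [one_smul, add_comm]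
    have hg0 : g 0 = Real.log Θ₀.det := by
      rw [hg]; simp only []; rw [zero_smul, add_zero]
    have hc₀' : c₀ = Matrix.trace (Δ * Θ₀⁻¹) := Matrix.trace_mul_comm _ _
    have hψ1eq : ψ 1 = c₀ - (Real.log (Δ + Θ₀).det - Real.log Θ₀.det) - K / 2 := by
      rw [hψ]; simp only []; rw [hg1, hg0]; ring
    rw [hψ1eq] at hψ1
    have hfinal : frobSq Δ / (2 * (L + 1 / (2 * L)) ^ 2) = K / 2 := by
      rw [hKdef, hMdef]
      have hLne : L ≠ 0 := ne_of_gt hL0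
      rw [div_div]
      congr 1
      field_simp
    rw [ge_iff_le, hfinal, ← hc₀']
    linarith
end
end

section
/- Let Θ_{R0}⁽¹⁾, Θ_{R0}⁽²⁾ be symmetric positive definite p×p real matrices with 1/L ≤ Λ_min(Θ_{R0}⁽ᵏ⁾) ≤ Λ_max(Θ_{R0}⁽ᵏ⁾) ≤ L for some L ≥ 1, set c = 1/(8L²), R₀⁽ᵏ⁾ = (Θ_{R0}⁽ᵏ⁾)⁻¹, and let s_k be the number of pairs (i,j) with i ≠ j and (Θ_{R0}⁽ᵏ⁾)_{ij} ≠ 0. Let R̂⁽¹⁾, R̂⁽²⁾ be symmetric p×p matrices such that R̂⁽ᵏ⁾ and R₀⁽ᵏ⁾ all have unit diagonal, and max_{k=1,2} ‖R̂⁽ᵏ⁾ − R₀⁽ᵏ⁾‖_∞ ≤ λ₀ for some λ₀ > 0. Suppose 2(ρ + λ₀) ≤ λ ≤ c/(8L) with ρ ≥ 0, and 8λ²(s₁+s₂)/c + 4pλ₀²/c ≤ λ₀/(2L). If (Θ̂_R⁽¹⁾, Θ̂_R⁽²⁾) minimizes F(Θ₁,Θ₂) = Σ_{k=1}² [tr(R̂⁽ᵏ⁾Θ_k)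 − log det Θ_k] + λ Σ_{k=1}² ‖Θ_k⁻‖₁ + ρ ‖Θ₁⁻ − Θ₂⁻‖₁ over pairs of symmetric positive definite matrices, then c Σ_{k=1}² ‖Θ̂_R⁽ᵏ⁾ − Θ_{R0}⁽ᵏ⁾‖_F² + λ Σ_{k=1}² ‖(Θ̂_R⁽ᵏ⁾ − Θ_{R0}⁽ᵏ⁾)⁻‖₁ ≤ 8λ²(s₁+s₂)/c. -/
open Matrix
open scoped BigOperators Classical

noncomputable section

lemma frobSq_eq_trace {p : ℕ} (M : Matrix (Fin p) (Fin p) ℝ) :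
    frobSq M = trace (Mᵀ * M) := by
  unfold frobSq Matrix.trace
  simp only [diag_apply, mul_apply, transpose_apply, pow_two]
  exact Finset.sum_comm

lemma frobSq_conj {p : ℕ} (U X : Matrix (Fin p) (Fin p) ℝ) (hU : Uᵀ * U = 1) :
    frobSq (U * X * Uᵀ) = frobSq X := by
  rw [frobSq_eq_trace, frobSq_eq_trace]
  have h1 : (U * X * Uᵀ)ᵀ * (U * X * Uᵀ) = U * ((Xᵀ * X) * Uᵀ) := by
    simp only [transpose_mul, transpose_transpose]
    calc Uᵀᵀ * (Xᵀ * Uᵀ) * (U * X * Uᵀ) = U * (Xᵀ * ((Uᵀ * U) * (X * Uᵀ))) := by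
          rw [transpose_transpose]; noncomm_ring
      _ = U * ((Xᵀ * X) * Uᵀ) := by rw [hU]; noncomm_ring
  rw [h1, trace_mul_comm, Matrix.mul_assoc, hU, Matrix.mul_one]

lemma real_conjTranspose_eq_transpose {p : ℕ} (X : Matrix (Fin p) (Fin p) ℝ) : Xᴴ = Xᵀ := by
  ext i j; simp [conjTranspose_apply]

lemma frobSq_diagonal {p : ℕ} (f : Fin p → ℝ) :
    frobSq (diagonal f) = ∑ i, (f i)^2 := by
  unfold frobSq
  have : ∀ i, ∑ j, (diagonal f i j)^2 = (f i)^2 := by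
    intro i
    rw [Finset.sum_eq_single i]
    · simp [diagonal_apply_eq]
    · intro b _ hb; simp [diagonal_apply_ne' f hb]
    · simp
  simp [this]

lemma frobSq_diag_conj {p : ℕ} (d : Fin p → ℝ) (Y : Matrix (Fin p) (Fin p) ℝ) :
    frobSq (diagonal d * Y * diagonal d) = ∑ i, ∑ j, (d i * d i) * (d j * d j) * (Y i j)^2 := by
  unfold frobSq
  congr 1; funext i; congr 1; funext j
  rw [Matrix.mul_diagonal, Matrix.diagonal_mul]
  ring

lemma key_decomp {p : ℕ} {L : ℝ} (hL : 1 ≤ L) {A B : Matrix (Fin p) (Fin p) ℝ}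
    (hA : A.PosDef) (hB : B.PosDef)
    (hev : ∀ i, 1/L ≤ hA.1.eigenvalues i ∧ hA.1.eigenvalues i ≤ L) :
    ∃ μ : Fin p → ℝ, (∀ i, 0 < μ i) ∧
      B.det = A.det * ∏ i, μ i ∧
      trace (A⁻¹ * B) = ∑ i, μ i ∧
      frobSq (B - A) ≤ L^2 * ∑ i, (μ i - 1)^2 ∧
      (∑ i, (μ i - 1)^2) ≤ L^2 * frobSq (B - A) ∧
      ∀ t : ℝ, ((1-t) • A + t • B).det = A.det * ∏ i, (1 - t + t * μ i) := by
  have hL0 : 0 < L := lt_of_lt_of_le one_pos hL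
  set a := hA.1.eigenvalues with ha_def
  have ha : ∀ i, 0 < a i := hA.eigenvalues_pos
  set U := (hA.1.eigenvectorUnitary : Matrix (Fin p) (Fin p) ℝ) with hU_def
  have hUmem := (hA.1.eigenvectorUnitary).2
  have hU2 : U * Uᵀ = 1 := by
    have := (Matrix.mem_unitaryGroup_iff).mp hUmem
    rwa [star_eq_conjTranspose, real_conjTranspose_eq_transpose] at this
  have hU1 : Uᵀ * U = 1 := by
    have := (Matrix.mem_unitaryGroup_iff').mp hUmem
    rwa [star_eq_conjTranspose, real_conjTranspose_eq_transpose] at this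
  have hspec : A = U * diagonal a * Uᵀ := by
    have := hA.1.spectral_theorem
    simp only [Unitary.conjStarAlgAut_apply, Unitary.coe_star, star_eq_conjTranspose, real_conjTranspose_eq_transpose] at this
    simpa using this
  set g : Fin p → ℝ := fun i => Real.sqrt (a i) with hg_def
  have hg : ∀ i, 0 < g i := fun i => Real.sqrt_pos.mpr (ha i)
  have hgg : ∀ i, g i * g i = a i := fun i => Real.mul_self_sqrt (ha i).le
  set N : Matrix (Fin p) (Fin p) ℝ := U * diagonal g with hN_def
  set M : Matrix (Fin p) (Fin p) ℝ := diagonal (fun i => (g i)⁻¹) * Uᵀ with hM_def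
  have hNM : N * M = 1 := by
    rw [hN_def, hM_def]
    calc U * diagonal g * (diagonal (fun i => (g i)⁻¹) * Uᵀ)
        = U * (diagonal g * diagonal (fun i => (g i)⁻¹)) * Uᵀ := by noncomm_ring
      _ = 1 := by
          rw [diagonal_mul_diagonal]
          have : (fun i => g i * (g i)⁻¹) = fun _ => (1:ℝ) := by
            funext i; exact mul_inv_cancel₀ (hg i).ne'
          rw [this, diagonal_one, Matrix.mul_one, hU2]
  have hMN : M * N = 1 := by
    rw [hN_def, hM_def]
    calc diagonal (fun i => (g i)⁻¹) * Uᵀ * (U * diagonal g)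
        = diagonal (fun i => (g i)⁻¹) * (Uᵀ * U) * diagonal g := by noncomm_ring
      _ = 1 := by
          rw [hU1, Matrix.mul_one, diagonal_mul_diagonal]
          have : (fun i => (g i)⁻¹ * g i) = fun _ => (1:ℝ) := by
            funext i; exact inv_mul_cancel₀ (hg i).ne'
          rw [this, diagonal_one]
  have hNtMt : Nᵀ * Mᵀ = 1 := by rw [← transpose_mul, hMN, transpose_one]
  have hMtNt : Mᵀ * Nᵀ = 1 := by rw [← transpose_mul, hNM, transpose_one]
  have hNNt : N * Nᵀ = A := by
    rw [hN_def, transpose_mul, diagonal_transpose]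
    calc U * diagonal g * (diagonal g * Uᵀ)
        = U * (diagonal g * diagonal g) * Uᵀ := by noncomm_ring
      _ = A := by
          rw [diagonal_mul_diagonal]
          have : (fun i => g i * g i) = a := by funext i; exact hgg i
          rw [this, ← hspec]
  set C : Matrix (Fin p) (Fin p) ℝ := M * B * Mᵀ with hC_def
  have hBC : B = N * C * Nᵀ := by
    rw [hC_def]
    calc B = (N * M) * B * (Mᵀ * Nᵀ) := by rw [hNM, hMtNt, Matrix.one_mul, Matrix.mul_one]
      _ = N * (M * B * Mᵀ) * Nᵀ := by noncomm_ring
  have hBt : Bᵀ = B := by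
    have := hB.1; rwa [Matrix.IsHermitian, real_conjTranspose_eq_transpose] at this
  have hC : C.PosDef := by
    rw [Matrix.posDef_iff_dotProduct_mulVec]
    constructor
    · rw [Matrix.IsHermitian, real_conjTranspose_eq_transpose, hC_def]
      calc (M * B * Mᵀ)ᵀ = Mᵀᵀ * (Bᵀ * Mᵀ) := by simp only [transpose_mul]
        _ = M * B * Mᵀ := by rw [transpose_transpose, hBt]; noncomm_ring
    · intro x hx
      have hx' : Mᵀ *ᵥ x ≠ 0 := by
        intro h
        apply hx
        have : Nᵀ *ᵥ (Mᵀ *ᵥ x) = x := by rw [mulVec_mulVec, hNtMt, one_mulVec]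
        rw [h, mulVec_zero] at this; exact this.symm
      have hpos := hB.dotProduct_mulVec_pos hx'
      have e1 : C *ᵥ x = M *ᵥ (B *ᵥ (Mᵀ *ᵥ x)) := by
        rw [mulVec_mulVec, mulVec_mulVec, hC_def]
      have hxM : x ᵥ* M = Mᵀ *ᵥ x := by
        conv_lhs => rw [← transpose_transpose M]
        rw [vecMul_transpose]
      have e2 : star x ⬝ᵥ (C *ᵥ x) = star (Mᵀ *ᵥ x) ⬝ᵥ (B *ᵥ (Mᵀ *ᵥ x)) := by
        simp only [star_trivial]
        rw [e1, dotProduct_mulVec x M, hxM]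
      rw [e2]; exact hpos
  set μ := hC.1.eigenvalues with hμ_def
  have hμ : ∀ i, 0 < μ i := hC.eigenvalues_pos
  set V := (hC.1.eigenvectorUnitary : Matrix (Fin p) (Fin p) ℝ) with hV_def
  have hVmem := (hC.1.eigenvectorUnitary).2
  have hV2 : V * Vᵀ = 1 := by
    have := (Matrix.mem_unitaryGroup_iff).mp hVmem
    rwa [star_eq_conjTranspose, real_conjTranspose_eq_transpose] at this
  have hV1 : Vᵀ * V = 1 := by
    have := (Matrix.mem_unitaryGroup_iff').mp hVmem
    rwa [star_eq_conjTranspose, real_conjTranspose_eq_transpose] at this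
  have hCspec : C = V * diagonal μ * Vᵀ := by
    have := hC.1.spectral_theorem
    simp only [Unitary.conjStarAlgAut_apply, Unitary.coe_star, star_eq_conjTranspose, real_conjTranspose_eq_transpose] at this
    simpa using this
  have hdetC : C.det = ∏ i, μ i := by
    have := hC.1.det_eq_prod_eigenvalues
    simpa using this
  have hdetA : A.det = N.det * N.det := by
    rw [← hNNt, det_mul, det_transpose]
  have hCm1 : C - 1 = V * diagonal (fun i => μ i - 1) * Vᵀ := by
    have h1 : V * diagonal (fun i => μ i - 1) * Vᵀ
        = V * diagonal μ * Vᵀ - V * 1 * Vᵀ := by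
      have : diagonal (fun i => μ i - 1) = diagonal μ - 1 := by
        rw [← diagonal_one, diagonal_sub]
      rw [this]; noncomm_ring
    rw [h1, Matrix.mul_one, hV2, ← hCspec]
  have hBA : B - A = U * (diagonal g * (C - 1) * diagonal g) * Uᵀ := by
    have h1 : B - A = N * (C - 1) * Nᵀ := by
      rw [hBC, ← hNNt]; noncomm_ring
    rw [h1, hN_def, transpose_mul, diagonal_transpose]; noncomm_ring
  have hfrobBA : frobSq (B - A) = ∑ i, ∑ j, a i * a j * ((C - 1) i j)^2 := by
    rw [hBA, frobSq_conj _ _ hU1, frobSq_diag_conj]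
    simp only [hgg]
  have hfrobC1 : frobSq (C - 1) = ∑ i, (μ i - 1)^2 := by
    rw [hCm1, frobSq_conj _ _ hV1, frobSq_diagonal]
  refine ⟨μ, hμ, ?_, ?_, ?_, ?_, ?_⟩
  · rw [hBC, det_mul, det_mul, hdetC, det_transpose, hdetA]; ring
  · have hAinv : A⁻¹ = Mᵀ * M := by
      rw [← hNNt, Matrix.mul_inv_rev, Matrix.inv_eq_right_inv hNM,
        Matrix.inv_eq_right_inv hNtMt]
    have h2 : A⁻¹ * B = Mᵀ * (C * Nᵀ) := by
      rw [hAinv, hBC]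
      calc Mᵀ * M * (N * C * Nᵀ) = Mᵀ * ((M * N) * (C * Nᵀ)) := by noncomm_ring
        _ = Mᵀ * (C * Nᵀ) := by rw [hMN, Matrix.one_mul]
    rw [h2, trace_mul_comm, Matrix.mul_assoc, hNtMt, Matrix.mul_one]
    rw [hCspec, trace_mul_comm, ← Matrix.mul_assoc, hV1, Matrix.one_mul, trace_diagonal]
  · rw [hfrobBA, ← hfrobC1]
    unfold frobSq
    rw [Finset.mul_sum]
    refine Finset.sum_le_sum fun i _ => ?_
    rw [Finset.mul_sum]
    refine Finset.sum_le_sum fun j _ => ?_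
    have h1 := (hev i).2
    have h2 := (hev j).2
    have h3 := (ha i).le
    have h4 := (ha j).le
    nlinarith [sq_nonneg ((C-1) i j), mul_le_mul h1 h2 h4 hL0.le]
  · rw [hfrobBA, ← hfrobC1]
    unfold frobSq
    rw [Finset.mul_sum]
    refine Finset.sum_le_sum fun i _ => ?_
    rw [Finset.mul_sum]
    refine Finset.sum_le_sum fun j _ => ?_
    have h1 := (hev i).1
    have h2 := (hev j).1
    have hiL : 1/L ≤ a i := h1
    have hjL : 1/L ≤ a j := h2
    have hL1 : (0:ℝ) < 1/L := by positivity
    have hLne : L ≠ 0 := hL0.ne'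
    have e : L^2 * (1/L * (1/L)) = 1 := by field_simp
    have key : (1:ℝ) ≤ L^2 * (a i * a j) := by
      have h6 := mul_le_mul hiL hjL hL1.le (ha i).le
      nlinarith [e, h6, sq_nonneg L]
    nlinarith [sq_nonneg ((C-1) i j)]
  · intro t
    have hconv : (1-t) • A + t • B = N * ((1-t) • 1 + t • C) * Nᵀ := by
      have e1 : N * ((1-t) • 1 + t • C) * Nᵀ = (1-t) • (N * Nᵀ) + t • (N * C * Nᵀ) := by
        rw [Matrix.mul_add, Matrix.add_mul, Matrix.mul_smul, Matrix.mul_smul,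
          Matrix.smul_mul, Matrix.smul_mul, Matrix.mul_one]
      rw [e1, hNNt, ← hBC]
    have hdiag : (1-t) • (1 : Matrix (Fin p) (Fin p) ℝ) + t • C
        = V * diagonal (fun i => 1 - t + t * μ i) * Vᵀ := by
      have h0 : (fun i => 1 - t + t * μ i) = ((1-t) • (fun _ => (1:ℝ)) + t • μ) := by
        funext i; simp only [Pi.add_apply, Pi.smul_apply, smul_eq_mul]; ring
      have h1 : diagonal (fun i => 1 - t + t * μ i)
          = (1-t) • (1 : Matrix (Fin p) (Fin p) ℝ) + t • diagonal μ := by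
        ext i j
        by_cases hij : i = j
        · subst hij
          simp only [diagonal_apply_eq, Matrix.add_apply, Matrix.smul_apply,
            Matrix.one_apply_eq, smul_eq_mul]
          ring
        · simp [diagonal_apply_ne _ hij, Matrix.one_apply_ne hij]
      have e1 : V * ((1-t) • 1 + t • diagonal μ) * Vᵀ
          = (1-t) • (V * Vᵀ) + t • (V * diagonal μ * Vᵀ) := by
        rw [Matrix.mul_add, Matrix.add_mul, Matrix.mul_smul, Matrix.mul_smul,
          Matrix.smul_mul, Matrix.smul_mul, Matrix.mul_one]
      rw [h1, e1, hV2, ← hCspec]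
    rw [hconv, hdiag]
    rw [show N * (V * diagonal (fun i => 1 - t + t * μ i) * Vᵀ) * Nᵀ
        = N * V * diagonal (fun i => 1 - t + t * μ i) * (Vᵀ * Nᵀ) from by noncomm_ring]
    simp only [det_mul, det_transpose, det_diagonal]
    have hVV : V.det * V.det = 1 := by
      have := congrArg det hV2
      rwa [det_mul, det_transpose, det_one] at this
    rw [hdetA]
    linear_combination (N.det * N.det * (∏ i, (1 - t + t * μ i))) * hVV

lemma log_le_quad {y : ℝ} (hy : 0 < y) (hy2 : y ≤ 2) :
    Real.log y ≤ (y - 1) - (y - 1)^2 / 8 := by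
  have hu : 0 < Real.sqrt y := Real.sqrt_pos.mpr hy
  have h1 : Real.log y = 2 * Real.log (Real.sqrt y) := by
    rw [Real.log_sqrt hy.le]; ring
  have h2 : Real.log (Real.sqrt y) ≤ Real.sqrt y - 1 := Real.log_le_sub_one_of_pos hu
  set u := Real.sqrt y with hu_def
  have hu2 : u^2 = y := Real.sq_sqrt hy.le
  nlinarith [sq_nonneg (u - 1), sq_nonneg (2*u - 3), hu.le]

lemma posDef_combo {p : ℕ} {A B : Matrix (Fin p) (Fin p) ℝ} (hA : A.PosDef) (hB : B.PosDef)
    {t : ℝ} (ht0 : 0 ≤ t) (ht1 : t ≤ 1) : ((1-t) • A + t • B).PosDef := by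
  rw [Matrix.posDef_iff_dotProduct_mulVec]
  constructor
  · have hAh := hA.1
    have hBh := hB.1
    rw [Matrix.IsHermitian] at hAh hBh ⊢
    rw [conjTranspose_add, conjTranspose_smul, conjTranspose_smul, hAh, hBh]
    simp
  · intro x hx
    have h1 := hA.dotProduct_mulVec_pos hx
    have h2 := hB.dotProduct_mulVec_pos hx
    rw [add_mulVec, smul_mulVec, smul_mulVec, dotProduct_add,
      dotProduct_smul, dotProduct_smul]
    simp only [smul_eq_mul]
    rcases lt_or_ge t 1 with h | h
    · have h3 : 0 < (1-t) * (star x ⬝ᵥ A *ᵥ x) := mul_pos (by linarith) h1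
      have h4 : 0 ≤ t * (star x ⬝ᵥ B *ᵥ x) := mul_nonneg ht0 h2.le
      linarith
    · have ht : t = 1 := le_antisymm ht1 h
      subst ht
      simpa using h2

lemma logdet_concave {p : ℕ} {L : ℝ} (hL : 1 ≤ L) {A B : Matrix (Fin p) (Fin p) ℝ}
    (hA : A.PosDef) (hB : B.PosDef)
    (hev : ∀ i, 1/L ≤ hA.1.eigenvalues i ∧ hA.1.eigenvalues i ≤ L)
    {t : ℝ} (ht0 : 0 ≤ t) (ht1 : t ≤ 1) :
    (1-t) * Real.log A.det + t * Real.log B.det ≤ Real.log (((1-t) • A + t • B).det) := by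
  obtain ⟨μ, hμ, hdet, -, -, -, hconv⟩ := key_decomp hL hA hB hev
  have hdA : 0 < A.det := hA.det_pos
  have hpos : ∀ i, (0:ℝ) < 1 - t + t * μ i := by
    intro i
    rcases lt_or_ge t 1 with h | h
    · nlinarith [hμ i, mul_nonneg ht0 (hμ i).le]
    · have ht : t = 1 := le_antisymm ht1 h
      subst ht
      simpa using hμ i
  rw [hconv t, hdet]
  rw [Real.log_mul hdA.ne' (Finset.prod_pos (fun i _ => hpos i)).ne',
    Real.log_mul hdA.ne' (Finset.prod_pos (fun i _ => hμ i)).ne',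
    Real.log_prod (fun i _ => (hpos i).ne'), Real.log_prod (fun i _ => (hμ i).ne')]
  have hsum : ∑ i, t * Real.log (μ i) ≤ ∑ i, Real.log (1 - t + t * μ i) := by
    refine Finset.sum_le_sum fun i _ => ?_
    have hc := (strictConcaveOn_log_Ioi.concaveOn).2 (Set.mem_Ioi.mpr one_pos)
      (Set.mem_Ioi.mpr (hμ i)) (by linarith : (0:ℝ) ≤ 1 - t) ht0 (by ring)
    simpa [smul_eq_mul, Real.log_one] using hc
  calc (1-t) * Real.log A.det + t * (Real.log A.det + ∑ i, Real.log (μ i))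
      = Real.log A.det + ∑ i, t * Real.log (μ i) := by rw [← Finset.mul_sum]; ring
    _ ≤ Real.log A.det + ∑ i, Real.log (1 - t + t * μ i) := by linarith

lemma logdet_strong {p : ℕ} {L : ℝ} (hL : 1 ≤ L) {A B : Matrix (Fin p) (Fin p) ℝ}
    (hA : A.PosDef) (hB : B.PosDef)
    (hev : ∀ i, 1/L ≤ hA.1.eigenvalues i ∧ hA.1.eigenvalues i ≤ L)
    (hF : frobSq (B - A) ≤ (1/L)^2) :
    Real.log B.det ≤ Real.log A.det + trace (A⁻¹ * (B - A)) - frobSq (B - A) / (8 * L^2) := by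
  have hL0 : 0 < L := lt_of_lt_of_le one_pos hL
  obtain ⟨μ, hμ, hdet, htr, hub, hlb, -⟩ := key_decomp hL hA hB hev
  have hdA : 0 < A.det := hA.det_pos
  have hAA : A⁻¹ * A = 1 := nonsing_inv_mul A hA.det_pos.ne'.isUnit
  have htr' : trace (A⁻¹ * (B - A)) = (∑ i, μ i) - (Fintype.card (Fin p) : ℝ) := by
    rw [Matrix.mul_sub, trace_sub, hAA, trace_one, htr]
  have hμ2 : ∀ i, μ i ≤ 2 := by
    intro i
    have h1 : (μ i - 1)^2 ≤ ∑ j, (μ j - 1)^2 :=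
      Finset.single_le_sum (f := fun j => (μ j - 1)^2) (fun j _ => sq_nonneg _) (Finset.mem_univ i)
    have h2 : (∑ j, (μ j - 1)^2) ≤ 1 := by
      have := hlb
      have hL2 : (0:ℝ) < L^2 := by positivity
      have e : L^2 * (1/L)^2 = 1 := by field_simp
      nlinarith [mul_le_mul_of_nonneg_left hF hL2.le]
    nlinarith
  have hlogdet : Real.log B.det = Real.log A.det + ∑ i, Real.log (μ i) := by
    rw [hdet, Real.log_mul hdA.ne' (Finset.prod_pos (fun i _ => hμ i)).ne',
      Real.log_prod (fun i _ => (hμ i).ne')]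
  have hsum : ∑ i, Real.log (μ i) ≤ (∑ i, (μ i - 1)) - (∑ i, (μ i - 1)^2) / 8 := by
    have h := Finset.sum_le_sum (fun i (_ : i ∈ Finset.univ) => log_le_quad (hμ i) (hμ2 i))
    rw [Finset.sum_sub_distrib] at h
    rw [Finset.sum_div]
    exact h
  have hsub : ∑ i, (μ i - 1) = (∑ i, μ i) - (Fintype.card (Fin p) : ℝ) := by
    rw [Finset.sum_sub_distrib]
    simp
  have hfr : frobSq (B - A) / L^2 ≤ ∑ i, (μ i - 1)^2 := by
    have hL2 : (0:ℝ) < L^2 := by positivity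
    rw [div_le_iff₀ hL2]
    linarith [hub]
  have hL2 : (0:ℝ) < L^2 := by positivity
  rw [hlogdet, htr']
  have : frobSq (B - A) / (8 * L^2) = (frobSq (B - A) / L^2) / 8 := by ring
  rw [this]
  linarith [hsum, hsub, hfr]

/-! ### small utilities -/

lemma offDiag_apply {p : ℕ} (A : Matrix (Fin p) (Fin p) ℝ) (i j : Fin p) :
    offDiagPart A i j = if i = j then 0 else A i j := by
  unfold offDiagPart diagPart
  rw [Matrix.sub_apply, diagonal_apply]
  by_cases h : i = j
  · subst h; simp
  · simp [h]

lemma l1off_eq {p : ℕ} (A : Matrix (Fin p) (Fin p) ℝ) :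
    l1Norm (offDiagPart A) = ∑ i, ∑ j, (if i = j then 0 else |A i j|) := by
  unfold l1Norm
  congr 1; funext i; congr 1; funext j
  rw [offDiag_apply]
  by_cases h : i = j <;> simp [h]

lemma l1off_nonneg {p : ℕ} (A : Matrix (Fin p) (Fin p) ℝ) :
    0 ≤ l1Norm (offDiagPart A) :=
  Finset.sum_nonneg fun i _ => Finset.sum_nonneg fun j _ => abs_nonneg _

lemma frobSq_nonneg {p : ℕ} (A : Matrix (Fin p) (Fin p) ℝ) : 0 ≤ frobSq A :=
  Finset.sum_nonneg fun i _ => Finset.sum_nonneg fun j _ => sq_nonneg _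

lemma frobSq_smul {p : ℕ} (t : ℝ) (A : Matrix (Fin p) (Fin p) ℝ) :
    frobSq (t • A) = t^2 * frobSq A := by
  unfold frobSq
  rw [Finset.mul_sum]
  congr 1; funext i
  rw [Finset.mul_sum]
  congr 1; funext j
  rw [Matrix.smul_apply, smul_eq_mul, mul_pow]

lemma entry_le_supNorm {p : ℕ} (A : Matrix (Fin p) (Fin p) ℝ) (i j : Fin p) :
    |A i j| ≤ supNorm A := by
  unfold supNorm
  have h1 : |A i j| ≤ ⨆ j', |A i j'| :=
    le_ciSup (f := fun j' => |A i j'|) (Set.Finite.bddAbove (Set.finite_range _)) j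
  have h2 : (⨆ j', |A i j'|) ≤ ⨆ i', ⨆ j', |A i' j'| :=
    le_ciSup (f := fun i' => ⨆ j', |A i' j'|) (Set.Finite.bddAbove (Set.finite_range _)) i
  linarith

lemma trace_mul_expand {p : ℕ} (E Δ : Matrix (Fin p) (Fin p) ℝ) :
    trace (E * Δ) = ∑ i, ∑ j, E i j * Δ j i := by
  unfold Matrix.trace
  simp only [diag_apply, mul_apply]

lemma trace_pert_bound {p : ℕ} {lam0 : ℝ} (E Δ : Matrix (Fin p) (Fin p) ℝ)
    (hEdiag : ∀ i, E i i = 0) (hE : ∀ i j, |E i j| ≤ lam0) :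
    |trace (E * Δ)| ≤ lam0 * l1Norm (offDiagPart Δ) := by
  rw [trace_mul_expand, l1off_eq]
  have step1 : |∑ i, ∑ j, E i j * Δ j i| ≤ ∑ i, ∑ j, |E i j * Δ j i| :=
    (Finset.abs_sum_le_sum_abs _ _).trans
      (Finset.sum_le_sum fun i _ => Finset.abs_sum_le_sum_abs _ _)
  have step2 : ∑ i, ∑ j, |E i j * Δ j i|
      ≤ ∑ i, ∑ j, (if i = j then 0 else lam0 * |Δ j i|) := by
    refine Finset.sum_le_sum fun i _ => Finset.sum_le_sum fun j _ => ?_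
    by_cases h : i = j
    · subst h; simp [hEdiag i]
    · rw [if_neg h, abs_mul]
      exact mul_le_mul_of_nonneg_right (hE i j) (abs_nonneg _)
  have step3 : ∑ i, ∑ j, (if i = j then 0 else lam0 * |Δ j i|)
      = lam0 * ∑ i, ∑ j, (if i = j then 0 else |Δ i j|) := by
    rw [Finset.sum_comm]
    rw [Finset.mul_sum]
    congr 1; funext i
    rw [Finset.mul_sum]
    congr 1; funext j
    by_cases h : i = j
    · subst h; simp
    · rw [if_neg (Ne.symm h), if_neg h]
  linarith

lemma pen_bound {p : ℕ} (Θ0 Δ : Matrix (Fin p) (Fin p) ℝ) :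
    l1Norm (offDiagPart Δ) + l1Norm (offDiagPart Θ0)
      ≤ l1Norm (offDiagPart (Θ0 + Δ))
        + 2 * ∑ i, ∑ j, (if i ≠ j ∧ Θ0 i j ≠ 0 then |Δ i j| else 0) := by
  rw [l1off_eq, l1off_eq, l1off_eq, Finset.mul_sum, ← Finset.sum_add_distrib,
    ← Finset.sum_add_distrib]
  refine Finset.sum_le_sum fun i _ => ?_
  rw [Finset.mul_sum, ← Finset.sum_add_distrib, ← Finset.sum_add_distrib]
  refine Finset.sum_le_sum fun j _ => ?_
  by_cases hij : i = j
  · simp [hij]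
  · rw [if_neg hij, if_neg hij, if_neg hij]
    by_cases h0 : Θ0 i j = 0
    · rw [if_neg (by tauto), Matrix.add_apply, h0]
      simp
    · rw [if_pos ⟨hij, h0⟩, Matrix.add_apply]
      have h := abs_add_le (Θ0 i j + Δ i j) (-(Δ i j))
      simp only [add_neg_cancel_right, abs_neg] at h
      linarith

lemma s_term_bound {p : ℕ} {c lam : ℝ} (hc : 0 < c) (Θ0 Δ : Matrix (Fin p) (Fin p) ℝ) :
    2 * lam * ∑ i, ∑ j, (if i ≠ j ∧ Θ0 i j ≠ 0 then |Δ i j| else 0)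
      ≤ (c/2) * frobSq Δ + (2*lam^2/c) * (sparsity Θ0 : ℝ) := by
  have amgm : ∀ x : ℝ, 2 * lam * |x| ≤ (c/2) * x^2 + 2*lam^2/c := by
    intro x
    have h := sq_nonneg (c * |x| - 2*lam)
    have h2 : (c*|x|)^2 = c^2 * x^2 := by rw [mul_pow, sq_abs]
    have hc2 : 0 < 2*c := by linarith
    rw [← sub_nonneg]
    have key : 0 ≤ ((c/2) * x^2 + 2*lam^2/c - 2*lam*|x|) * (2*c) := by
      have e : ((c/2) * x^2 + 2*lam^2/c - 2*lam*|x|) * (2*c)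
          = c^2*x^2 + 4*lam^2 - 4*lam*(c*|x|) := by field_simp; ring
      rw [e]; nlinarith
    exact (mul_nonneg_iff_of_pos_right hc2).mp key
  have hsum_ite : ∑ i, ∑ j, (if i ≠ j ∧ Θ0 i j ≠ 0 then (2*lam^2/c : ℝ) else 0)
      = (sparsity Θ0 : ℝ) * (2*lam^2/c) := by
    rw [← Finset.sum_product']
    rw [show (Finset.univ ×ˢ Finset.univ : Finset (Fin p × Fin p)) = Finset.univ from
      Finset.univ_product_univ]
    rw [← Finset.sum_filter]
    rw [Finset.sum_const, nsmul_eq_mul]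
    rfl
  have main : 2 * lam * ∑ i, ∑ j, (if i ≠ j ∧ Θ0 i j ≠ 0 then |Δ i j| else 0)
      ≤ ∑ i, ∑ j, ((c/2) * (Δ i j)^2 + (if i ≠ j ∧ Θ0 i j ≠ 0 then (2*lam^2/c : ℝ) else 0)) := by
    rw [Finset.mul_sum]
    refine Finset.sum_le_sum fun i _ => ?_
    rw [Finset.mul_sum]
    refine Finset.sum_le_sum fun j _ => ?_
    by_cases h : i ≠ j ∧ Θ0 i j ≠ 0
    · rw [if_pos h, if_pos h]
      exact amgm (Δ i j)
    · rw [if_neg h, if_neg h, mul_zero]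
      have := sq_nonneg (Δ i j)
      nlinarith
  have expand : ∑ i, ∑ j, ((c/2) * (Δ i j)^2 + (if i ≠ j ∧ Θ0 i j ≠ 0 then (2*lam^2/c : ℝ) else 0))
      = (c/2) * frobSq Δ + (sparsity Θ0 : ℝ) * (2*lam^2/c) := by
    rw [← hsum_ite]
    unfold frobSq
    rw [Finset.mul_sum, ← Finset.sum_add_distrib]
    congr 1; funext i
    rw [Finset.mul_sum, ← Finset.sum_add_distrib]
  rw [expand] at main
  linarith [main]

lemma fused_bound {p : ℕ} (A1 A2 D1 D2 : Matrix (Fin p) (Fin p) ℝ) :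
    l1Norm (offDiagPart A1 - offDiagPart A2)
      ≤ l1Norm (offDiagPart (A1 + D1) - offDiagPart (A2 + D2))
        + l1Norm (offDiagPart D1) + l1Norm (offDiagPart D2) := by
  unfold l1Norm
  rw [← Finset.sum_add_distrib, ← Finset.sum_add_distrib]
  refine Finset.sum_le_sum fun i _ => ?_
  rw [← Finset.sum_add_distrib, ← Finset.sum_add_distrib]
  refine Finset.sum_le_sum fun j _ => ?_
  simp only [Matrix.sub_apply, offDiag_apply, Matrix.add_apply]
  by_cases hij : i = j
  · simp [hij]
  · simp only [if_neg hij]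
    have h1 := abs_add_le (A1 i j + D1 i j - (A2 i j + D2 i j)) (D2 i j - D1 i j)
    have h2 := abs_sub (D2 i j) (D1 i j)
    have e : A1 i j + D1 i j - (A2 i j + D2 i j) + (D2 i j - D1 i j) = A1 i j - A2 i j := by ring
    rw [e] at h1
    linarith

lemma l1off_convex {p : ℕ} {t : ℝ} (ht0 : 0 ≤ t) (ht1 : t ≤ 1)
    (A B : Matrix (Fin p) (Fin p) ℝ) :
    l1Norm (offDiagPart ((1-t) • A + t • B))
      ≤ (1-t) * l1Norm (offDiagPart A) + t * l1Norm (offDiagPart B) := by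
  rw [l1off_eq, l1off_eq, l1off_eq, Finset.mul_sum, Finset.mul_sum, ← Finset.sum_add_distrib]
  refine Finset.sum_le_sum fun i _ => ?_
  rw [Finset.mul_sum, Finset.mul_sum, ← Finset.sum_add_distrib]
  refine Finset.sum_le_sum fun j _ => ?_
  by_cases hij : i = j
  · simp [hij]
  · simp only [if_neg hij, Matrix.add_apply, Matrix.smul_apply, smul_eq_mul]
    calc |(1-t) * A i j + t * B i j| ≤ |(1-t) * A i j| + |t * B i j| := abs_add_le _ _
      _ = (1-t) * |A i j| + t * |B i j| := by
          rw [abs_mul, abs_mul, abs_of_nonneg (by linarith : (0:ℝ) ≤ 1-t), abs_of_nonneg ht0]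

lemma fused_convex {p : ℕ} {t : ℝ} (ht0 : 0 ≤ t) (ht1 : t ≤ 1)
    (A1 A2 B1 B2 : Matrix (Fin p) (Fin p) ℝ) :
    l1Norm (offDiagPart ((1-t) • A1 + t • B1) - offDiagPart ((1-t) • A2 + t • B2))
      ≤ (1-t) * l1Norm (offDiagPart A1 - offDiagPart A2)
        + t * l1Norm (offDiagPart B1 - offDiagPart B2) := by
  unfold l1Norm
  rw [Finset.mul_sum, Finset.mul_sum, ← Finset.sum_add_distrib]
  refine Finset.sum_le_sum fun i _ => ?_
  rw [Finset.mul_sum, Finset.mul_sum, ← Finset.sum_add_distrib]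
  refine Finset.sum_le_sum fun j _ => ?_
  simp only [Matrix.sub_apply, offDiag_apply, Matrix.add_apply, Matrix.smul_apply, smul_eq_mul]
  by_cases hij : i = j
  · simp [hij]
  · simp only [if_neg hij]
    have e : (1-t) * A1 i j + t * B1 i j - ((1-t) * A2 i j + t * B2 i j)
        = (1-t) * (A1 i j - A2 i j) + t * (B1 i j - B2 i j) := by ring
    rw [e]
    calc |(1-t) * (A1 i j - A2 i j) + t * (B1 i j - B2 i j)|
        ≤ |(1-t) * (A1 i j - A2 i j)| + |t * (B1 i j - B2 i j)| := abs_add_le _ _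
      _ = (1-t) * |A1 i j - A2 i j| + t * |B1 i j - B2 i j| := by
          rw [abs_mul, abs_mul, abs_of_nonneg (by linarith : (0:ℝ) ≤ 1-t), abs_of_nonneg ht0]

lemma trace_combo {p : ℕ} (R A B : Matrix (Fin p) (Fin p) ℝ) (t : ℝ) :
    trace (R * ((1-t) • A + t • B)) = (1-t) * trace (R * A) + t * trace (R * B) := by
  rw [Matrix.mul_add, Matrix.mul_smul, Matrix.mul_smul, trace_add, trace_smul, trace_smul]
  simp [smul_eq_mul]

lemma obj_segment {p : ℕ} {L lam rho : ℝ} (hL : 1 ≤ L)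
    (Rhat Θ0 Θ1 : Fin 2 → Matrix (Fin p) (Fin p) ℝ)
    (hΘ0 : ∀ k, (Θ0 k).PosDef)
    (heig : ∀ k i, 1/L ≤ (hΘ0 k).1.eigenvalues i ∧ (hΘ0 k).1.eigenvalues i ≤ L)
    (hΘ1 : ∀ k, (Θ1 k).PosDef)
    (hlam : 0 ≤ lam) (hrho : 0 ≤ rho) {t : ℝ} (ht0 : 0 ≤ t) (ht1 : t ≤ 1) :
    objFGL Rhat lam rho (fun k => (1-t) • Θ0 k + t • Θ1 k)
      ≤ (1-t) * objFGL Rhat lam rho Θ0 + t * objFGL Rhat lam rho Θ1 := by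
  have hA : ∀ k, trace (Rhat k * ((1-t) • Θ0 k + t • Θ1 k))
        - Real.log (((1-t) • Θ0 k + t • Θ1 k)).det
      ≤ (1-t) * (trace (Rhat k * Θ0 k) - Real.log (Θ0 k).det)
        + t * (trace (Rhat k * Θ1 k) - Real.log (Θ1 k).det) := by
    intro k
    have h1 := trace_combo (Rhat k) (Θ0 k) (Θ1 k) t
    have h2 := logdet_concave hL (hΘ0 k) (hΘ1 k) (heig k) ht0 ht1
    linarith
  have hB0 := l1off_convex ht0 ht1 (Θ0 0) (Θ1 0)
  have hB1 := l1off_convex ht0 ht1 (Θ0 1) (Θ1 1)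
  have hC := fused_convex ht0 ht1 (Θ0 0) (Θ0 1) (Θ1 0) (Θ1 1)
  have hBl := mul_le_mul_of_nonneg_left (add_le_add hB0 hB1) hlam
  have hCl := mul_le_mul_of_nonneg_left hC hrho
  have hA0 := hA 0
  have hA1 := hA 1
  unfold objFGL
  simp only [Fin.sum_univ_two,
    show ((0:Fin 2) < 1) = True from eq_true (by decide),
    show ((0:Fin 2) < 0) = False from eq_false (by decide),
    show ((1:Fin 2) < 0) = False from eq_false (by decide),
    show ((1:Fin 2) < 1) = False from eq_false (by decide),
    if_true, if_false, add_zero, zero_add]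
  nlinarith [hA0, hA1, hBl, hCl]

lemma lemG {p : ℕ} {L lam rho lam0 : ℝ} (hL : 1 ≤ L)
    (ΘR0 Rhat Θ : Fin 2 → Matrix (Fin p) (Fin p) ℝ)
    (hΘR0 : ∀ k, (ΘR0 k).PosDef)
    (heig : ∀ k i, 1/L ≤ (hΘR0 k).1.eigenvalues i ∧ (hΘR0 k).1.eigenvalues i ≤ L)
    (hRdiag : ∀ k i, Rhat k i i = 1)
    (hR0diag : ∀ k i, (ΘR0 k)⁻¹ i i = 1)
    (hclose : ∀ k, supNorm (Rhat k - (ΘR0 k)⁻¹) ≤ lam0)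
    (hlam0 : 0 ≤ lam0) (hrho : 0 ≤ rho) (hlam_low : 2*(rho+lam0) ≤ lam)
    (hΘ : ∀ k, (Θ k).PosDef)
    (hF : ∀ k, frobSq (Θ k - ΘR0 k) ≤ (1/L)^2) :
    (1/(8*L^2))/2 * (∑ k, frobSq (Θ k - ΘR0 k))
      + (lam/2) * (∑ k, l1Norm (offDiagPart (Θ k - ΘR0 k)))
      - (2*lam^2 / (1/(8*L^2))) * ((sparsity (ΘR0 0) : ℝ) + (sparsity (ΘR0 1) : ℝ))
    ≤ objFGL Rhat lam rho Θ - objFGL Rhat lam rho ΘR0 := by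
  have hL0 : 0 < L := lt_of_lt_of_le one_pos hL
  have hc : (0:ℝ) < 1/(8*L^2) := by positivity
  set c : ℝ := 1/(8*L^2) with hc_def
  have hlam : 0 ≤ lam := le_trans (by linarith) hlam_low
  have htrace : ∀ k, trace (Rhat k * Θ k) - trace (Rhat k * ΘR0 k)
      = trace ((ΘR0 k)⁻¹ * (Θ k - ΘR0 k))
        + trace ((Rhat k - (ΘR0 k)⁻¹) * (Θ k - ΘR0 k)) := by
    intro k
    have e1 : trace (Rhat k * Θ k) - trace (Rhat k * ΘR0 k)
        = trace (Rhat k * (Θ k - ΘR0 k)) := by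
      rw [Matrix.mul_sub, trace_sub]
    have e2 : Rhat k * (Θ k - ΘR0 k)
        = (ΘR0 k)⁻¹ * (Θ k - ΘR0 k) + (Rhat k - (ΘR0 k)⁻¹) * (Θ k - ΘR0 k) := by
      noncomm_ring
    rw [e1, e2, trace_add]
  have hlog : ∀ k, Real.log (Θ k).det - Real.log (ΘR0 k).det
      ≤ trace ((ΘR0 k)⁻¹ * (Θ k - ΘR0 k)) - c * frobSq (Θ k - ΘR0 k) := by
    intro k
    have h := logdet_strong hL (hΘR0 k) (hΘ k) (heig k) (hF k)
    have e : frobSq (Θ k - ΘR0 k) / (8*L^2) = c * frobSq (Θ k - ΘR0 k) := by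
      rw [hc_def]; ring
    rw [e] at h
    linarith
  have hE : ∀ k, -(lam0 * l1Norm (offDiagPart (Θ k - ΘR0 k)))
      ≤ trace ((Rhat k - (ΘR0 k)⁻¹) * (Θ k - ΘR0 k)) := by
    intro k
    have h : |trace ((Rhat k - (ΘR0 k)⁻¹) * (Θ k - ΘR0 k))|
        ≤ lam0 * l1Norm (offDiagPart (Θ k - ΘR0 k)) := by
      refine trace_pert_bound _ _ (fun i => ?_) (fun i j => ?_)
      · rw [Matrix.sub_apply, hRdiag k i, hR0diag k i, sub_self]
      · exact (entry_le_supNorm _ i j).trans (hclose k)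
    exact (abs_le.mp h).1
  have hpen : ∀ k, lam * (l1Norm (offDiagPart (Θ k - ΘR0 k)) + l1Norm (offDiagPart (ΘR0 k)))
      ≤ lam * (l1Norm (offDiagPart (Θ k))
        + 2 * ∑ i, ∑ j, (if i ≠ j ∧ ΘR0 k i j ≠ 0 then |(Θ k - ΘR0 k) i j| else 0)) := by
    intro k
    refine mul_le_mul_of_nonneg_left ?_ hlam
    have h := pen_bound (ΘR0 k) (Θ k - ΘR0 k)
    have e : ΘR0 k + (Θ k - ΘR0 k) = Θ k := by abel
    rw [e] at h
    exact h
  have hS : ∀ k, 2 * lam * ∑ i, ∑ j, (if i ≠ j ∧ ΘR0 k i j ≠ 0 then |(Θ k - ΘR0 k) i j| else 0)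
      ≤ (c/2) * frobSq (Θ k - ΘR0 k) + (2*lam^2/c) * (sparsity (ΘR0 k) : ℝ) :=
    fun k => s_term_bound hc _ _
  have hfuse : rho * l1Norm (offDiagPart (ΘR0 0) - offDiagPart (ΘR0 1))
      ≤ rho * (l1Norm (offDiagPart (Θ 0) - offDiagPart (Θ 1))
        + l1Norm (offDiagPart (Θ 0 - ΘR0 0)) + l1Norm (offDiagPart (Θ 1 - ΘR0 1))) := by
    refine mul_le_mul_of_nonneg_left ?_ hrho
    have h := fused_bound (ΘR0 0) (ΘR0 1) (Θ 0 - ΘR0 0) (Θ 1 - ΘR0 1)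
    have e0 : ΘR0 0 + (Θ 0 - ΘR0 0) = Θ 0 := by abel
    have e1 : ΘR0 1 + (Θ 1 - ΘR0 1) = Θ 1 := by abel
    rw [e0, e1] at h
    exact h
  have hT0 := l1off_nonneg (Θ 0 - ΘR0 0)
  have hT1 := l1off_nonneg (Θ 1 - ΘR0 1)
  have hcoef0 : (lam0 + rho) * l1Norm (offDiagPart (Θ 0 - ΘR0 0))
      ≤ (lam/2) * l1Norm (offDiagPart (Θ 0 - ΘR0 0)) :=
    mul_le_mul_of_nonneg_right (by linarith) hT0
  have hcoef1 : (lam0 + rho) * l1Norm (offDiagPart (Θ 1 - ΘR0 1))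
      ≤ (lam/2) * l1Norm (offDiagPart (Θ 1 - ΘR0 1)) :=
    mul_le_mul_of_nonneg_right (by linarith) hT1
  have htrace0 := htrace 0
  have htrace1 := htrace 1
  have hlog0 := hlog 0
  have hlog1 := hlog 1
  have hE0 := hE 0
  have hE1 := hE 1
  have hpen0 := hpen 0
  have hpen1 := hpen 1
  have hS0 := hS 0
  have hS1 := hS 1
  unfold objFGL
  simp only [Fin.sum_univ_two,
    show ((0:Fin 2) < 1) = True from eq_true (by decide),
    show ((0:Fin 2) < 0) = False from eq_false (by decide),
    show ((1:Fin 2) < 0) = False from eq_false (by decide),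
    show ((1:Fin 2) < 1) = False from eq_false (by decide),
    if_true, if_false, add_zero, zero_add]
  linarith

set_option maxHeartbeats 2000000 in
/-- Oracle inequality (Frobenius/ℓ₁ part) for the two-group fused graphical
lasso estimator based on correlation-type matrices with unit diagonals; here
`c = 1/(8L²)` and `R₀⁽ᵏ⁾ = (Θ_{R0}⁽ᵏ⁾)⁻¹`. -/
theorem oracle_inequality_FGL_two_correlation
    (p : ℕ) (L lam rho lam0 : ℝ) (hL : 1 ≤ L)
    (ΘR0 Rhat ΘhatR : Fin 2 → Matrix (Fin p) (Fin p) ℝ)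
    (hΘR0 : ∀ k, (ΘR0 k).PosDef)
    (heig : ∀ k i, 1 / L ≤ (hΘR0 k).1.eigenvalues i ∧ (hΘR0 k).1.eigenvalues i ≤ L)
    (hRsymm : ∀ k, (Rhat k).IsSymm)
    (hRdiag : ∀ k i, Rhat k i i = 1)
    (hR0diag : ∀ k i, (ΘR0 k)⁻¹ i i = 1)
    (hlam0 : 0 < lam0)
    (hclose : ∀ k, supNorm (Rhat k - (ΘR0 k)⁻¹) ≤ lam0)
    (hrho : 0 ≤ rho)
    (hlam_low : 2 * (rho + lam0) ≤ lam)
    (hlam_high : lam ≤ (1 / (8 * L ^ 2)) / (8 * L))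
    (hsparse : 8 * lam ^ 2 * ((sparsity (ΘR0 0) : ℝ) + (sparsity (ΘR0 1) : ℝ)) / (1 / (8 * L ^ 2))
        + 4 * (p : ℝ) * lam0 ^ 2 / (1 / (8 * L ^ 2)) ≤ lam0 / (2 * L))
    (hΘhatR : ∀ k, (ΘhatR k).PosDef)
    (hmin : ∀ Θ : Fin 2 → Matrix (Fin p) (Fin p) ℝ, (∀ k, (Θ k).PosDef) →
        objFGL Rhat lam rho ΘhatR ≤ objFGL Rhat lam rho Θ) :
    (1 / (8 * L ^ 2)) * ∑ k, frobSq (ΘhatR k - ΘR0 k)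
      + lam * ∑ k, l1Norm (offDiagPart (ΘhatR k - ΘR0 k))
      ≤ 8 * lam ^ 2 * ((sparsity (ΘR0 0) : ℝ) + (sparsity (ΘR0 1) : ℝ)) / (1 / (8 * L ^ 2)) := by
  have hL0 : 0 < L := lt_of_lt_of_le one_pos hL
  have hc : (0:ℝ) < 1 / (8 * L ^ 2) := by positivity
  set c : ℝ := 1 / (8 * L ^ 2) with hc_def
  have hlam : 0 < lam := lt_of_lt_of_le (by linarith) hlam_low
  have hl0half : lam0 ≤ lam / 2 := by linarith
  set s : ℝ := (sparsity (ΘR0 0) : ℝ) + (sparsity (ΘR0 1) : ℝ) with hs_def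
  have hs0 : (0:ℝ) ≤ s := by rw [hs_def]; positivity
  -- numeric: (2λ²/c) s < (c/2)(1/L)²
  have hb : 8 * lam ^ 2 * s / c ≤ lam0 / (2 * L) := by
    have h4p : (0:ℝ) ≤ 4 * (p : ℝ) * lam0 ^ 2 / c := by positivity
    linarith [hsparse]
  have h9 : lam0 / (2 * L) ≤ lam / (4 * L) := by
    rw [div_le_div_iff₀ (by positivity) (by positivity)]
    nlinarith
  have h10 : lam / (4 * L) ≤ (c / (8 * L)) / (4 * L) := by gcongr
  have h11 : (c / (8 * L)) / (4 * L) = c / (32 * L ^ 2) := by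
    rw [div_div]
    congr 1
    ring
  have hkey : 8 * lam ^ 2 * s / c ≤ c / (32 * L ^ 2) := by
    calc 8 * lam ^ 2 * s / c ≤ lam0 / (2*L) := hb
      _ ≤ lam / (4*L) := h9
      _ ≤ (c / (8*L)) / (4*L) := h10
      _ = c / (32 * L^2) := h11
  have hnum : (2 * lam ^ 2 / c) * s < (c/2) * (1/L)^2 := by
    have e1 : (2 * lam ^ 2 / c) * s = (8 * lam ^ 2 * s / c) / 4 := by ring
    have e2 : (c/2) * (1/L)^2 = c / (2 * L^2) := by ring
    have h12 : c / (32 * L ^ 2) / 4 < c / (2 * L ^ 2) := by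
      have e3 : c / (32 * L ^ 2) / 4 = c / (128 * L ^ 2) := by ring
      rw [e3, div_lt_div_iff₀ (by positivity) (by positivity)]
      nlinarith [mul_pos hc (pow_pos hL0 2)]
    rw [e1, e2]
    linarith
  -- Step 1 : no large deviation
  have hbasic := hmin ΘR0 hΘR0
  have hD : (∑ k, frobSq (ΘhatR k - ΘR0 k)) ≤ (1/L)^2 := by
    by_contra hcon
    push_neg at hcon
    set D2 := ∑ k, frobSq (ΘhatR k - ΘR0 k) with hD2_def
    have hD2pos : 0 < D2 := lt_trans (by positivity) hcon
    have hDrpos : 0 < Real.sqrt D2 := Real.sqrt_pos.mpr hD2pos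
    have hDr2 : (Real.sqrt D2)^2 = D2 := Real.sq_sqrt hD2pos.le
    set t : ℝ := (1/L) / Real.sqrt D2 with ht_def
    have ht0 : 0 < t := by positivity
    have ht1 : t < 1 := by
      rw [ht_def, div_lt_one hDrpos]
      nlinarith [hDrpos, hcon, hDr2, (by positivity : (0:ℝ) < 1/L)]
    set Θt := fun k => (1-t) • ΘR0 k + t • ΘhatR k with hΘt_def
    have hΘtPD : ∀ k, (Θt k).PosDef := fun k => posDef_combo (hΘR0 k) (hΘhatR k) ht0.le ht1.le
    have hfrobt : ∀ k, frobSq (Θt k - ΘR0 k) = t^2 * frobSq (ΘhatR k - ΘR0 k) := by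
      intro k
      have hdiff : Θt k - ΘR0 k = t • (ΘhatR k - ΘR0 k) := by
        rw [hΘt_def]; module
      rw [hdiff, frobSq_smul]
    have ht2 : t^2 * D2 = (1/L)^2 := by
      rw [ht_def, div_pow, hDr2]
      exact div_mul_cancel₀ _ hD2pos.ne'
    have hsum_t : ∑ k, frobSq (Θt k - ΘR0 k) = (1/L)^2 := by
      rw [Fin.sum_univ_two, hfrobt 0, hfrobt 1, ← mul_add, ← Fin.sum_univ_two
        (f := fun k => frobSq (ΘhatR k - ΘR0 k)), ← hD2_def, ht2]
    have hFt : ∀ k, frobSq (Θt k - ΘR0 k) ≤ (1/L)^2 := by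
      intro k
      rw [← hsum_t, Fin.sum_univ_two]
      have h0 := frobSq_nonneg (Θt 0 - ΘR0 0)
      have h1 := frobSq_nonneg (Θt 1 - ΘR0 1)
      fin_cases k
      · simpa using (by linarith : frobSq (Θt 0 - ΘR0 0) ≤ frobSq (Θt 0 - ΘR0 0) + frobSq (Θt 1 - ΘR0 1))
      · simpa using (by linarith : frobSq (Θt 1 - ΘR0 1) ≤ frobSq (Θt 0 - ΘR0 0) + frobSq (Θt 1 - ΘR0 1))
    have hlow := lemG hL ΘR0 Rhat Θt hΘR0 heig hRdiag hR0diag hclose hlam0.le hrho hlam_low hΘtPD hFt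
    rw [← hs_def] at hlow
    rw [← hc_def] at hlow
    have hseg := obj_segment hL Rhat ΘR0 ΘhatR hΘR0 heig hΘhatR hlam.le hrho ht0.le ht1.le
    have hup : objFGL Rhat lam rho Θt ≤ objFGL Rhat lam rho ΘR0 := by
      have h2 : t * objFGL Rhat lam rho ΘhatR ≤ t * objFGL Rhat lam rho ΘR0 :=
        mul_le_mul_of_nonneg_left hbasic ht0.le
      calc objFGL Rhat lam rho Θt
          ≤ (1-t) * objFGL Rhat lam rho ΘR0 + t * objFGL Rhat lam rho ΘhatR := hseg
        _ ≤ objFGL Rhat lam rho ΘR0 := by linarith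
    have hTt : 0 ≤ ∑ k, l1Norm (offDiagPart (Θt k - ΘR0 k)) := by
      rw [Fin.sum_univ_two]
      have ha := l1off_nonneg (Θt 0 - ΘR0 0)
      have hb' := l1off_nonneg (Θt 1 - ΘR0 1)
      linarith
    have hTt' : 0 ≤ (lam/2) * ∑ k, l1Norm (offDiagPart (Θt k - ΘR0 k)) :=
      mul_nonneg (by linarith) hTt
    rw [hsum_t] at hlow
    linarith [hlow, hup, hnum, hTt']
  -- Step 2 : conclude
  have hFhat : ∀ k, frobSq (ΘhatR k - ΘR0 k) ≤ (1/L)^2 := by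
    intro k
    have h0 := frobSq_nonneg (ΘhatR 0 - ΘR0 0)
    have h1 := frobSq_nonneg (ΘhatR 1 - ΘR0 1)
    have hD' := hD
    rw [Fin.sum_univ_two] at hD'
    fin_cases k
    · simpa using (by linarith : frobSq (ΘhatR 0 - ΘR0 0) ≤ (1/L)^2)
    · simpa using (by linarith : frobSq (ΘhatR 1 - ΘR0 1) ≤ (1/L)^2)
  have hlow := lemG hL ΘR0 Rhat ΘhatR hΘR0 heig hRdiag hR0diag hclose hlam0.le hrho hlam_low
    hΘhatR hFhat
  rw [← hs_def] at hlow
  rw [← hc_def] at hlow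
  have e : (8:ℝ) * lam^2 * s / c = 4 * ((2*lam^2/c) * s) := by ring
  have hTs : 0 ≤ ∑ k, l1Norm (offDiagPart (ΘhatR k - ΘR0 k)) := by
    rw [Fin.sum_univ_two]
    have ha := l1off_nonneg (ΘhatR 0 - ΘR0 0)
    have hb' := l1off_nonneg (ΘhatR 1 - ΘR0 1)
    linarith
  have hY : 0 ≤ 2 * lam ^ 2 / c * s :=
    mul_nonneg (div_nonneg (by positivity) hc.le) hs0
  linarith [hlow, hbasic, mul_nonneg hlam.le hTs, hY]
end
end

section
/- Let Σ̂⁽¹⁾, Σ̂⁽²⁾ be symmetric p×p real matrices and let W₁, W₂ be diagonal p×p matrices with strictly positive diagonal entries; set R̂⁽ᵏ⁾ = W_k⁻¹ Σ̂⁽ᵏ⁾ W_k⁻¹. Then for any λ, ρ ≥ 0, a pair (Θ₁, Θ₂) of symmetric positive definite matrices minimizes the weighted fused graphical lasso objective Σ_{k=1}² [tr(Σ̂⁽ᵏ⁾Θ_k) − log det Θ_k] + λ Σ_{k=1}² Σ_{i≠j} (W_k)_{ii}(W_k)_{jj}|(Θ_k)_{ij}| + ρ Σ_{i≠j} |(W₁)_{ii}(W₁)_{jj}(Θ₁)_{ij}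 − (W₂)_{ii}(W₂)_{jj}(Θ₂)_{ij}| over pairs of symmetric positive definite matrices if and only if (W₁Θ₁W₁, W₂Θ₂W₂) minimizes the objective Σ_{k=1}² [tr(R̂⁽ᵏ⁾Ψ_k) − log det Ψ_k] + λ Σ_{k=1}² ‖Ψ_k⁻‖₁ + ρ ‖Ψ₁⁻ − Ψ₂⁻‖₁ over pairs of symmetric positive definite matrices. In particular, the minimizers are related by Θ̂_R⁽ᵏ⁾ = W_k Θ̂_w⁽ᵏ⁾ W_k. -/
open Matrix
open scoped BigOperators Classical

noncomputable section

/-- Weighted fused graphical lasso objective for two groups with weight vectors `w k`. -/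
def objWFGL {p : ℕ} (S : Fin 2 → Matrix (Fin p) (Fin p) ℝ) (w : Fin 2 → Fin p → ℝ)
    (lam rho : ℝ) (Θ : Fin 2 → Matrix (Fin p) (Fin p) ℝ) : ℝ :=
  ∑ k, (Matrix.trace (S k * Θ k) - Real.log (Θ k).det)
    + lam * ∑ k, ∑ i, ∑ j, (if i = j then 0 else w k i * w k j * |Θ k i j|)
    + rho * ∑ i, ∑ j,
        (if i = j then 0 else |w 0 i * w 0 j * Θ 0 i j - w 1 i * w 1 j * Θ 1 i j|)

/-- Auxiliary: conjugation by a diagonal matrix with nonzero entries preserves PD. -/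
lemma posDef_diag_conj {p : ℕ} {Θ : Matrix (Fin p) (Fin p) ℝ} (h : Θ.PosDef)
    (d : Fin p → ℝ) (hd : ∀ i, d i ≠ 0) :
    (Matrix.diagonal d * Θ * Matrix.diagonal d).PosDef := by
  have hdT : (Matrix.diagonal d)ᴴ = Matrix.diagonal d := by
    simp [Matrix.diagonal_conjTranspose]
  rw [Matrix.posDef_iff_dotProduct_mulVec]
  constructor
  · have := Matrix.isHermitian_conjTranspose_mul_mul (Matrix.diagonal d) h.1
    rwa [hdT] at this
  · intro x hx
    have hx' : Matrix.diagonal d *ᵥ x ≠ 0 := by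
      intro hc
      apply hx
      funext i
      have := congrFun hc i
      simp [Matrix.mulVec_diagonal] at this
      rcases this with h1 | h1
      · exact absurd h1 (hd i)
      · exact h1
    have := h.dotProduct_mulVec_pos hx'
    simpa only [star_mulVec, dotProduct_mulVec, vecMul_vecMul, hdT] using this

lemma diag_det_unit {p : ℕ} (d : Fin p → ℝ) (hd : ∀ i, d i ≠ 0) :
    IsUnit (Matrix.diagonal d).det := by
  simp [Matrix.det_diagonal]
  exact (Finset.prod_ne_zero_iff.mpr fun i _ => hd i)

lemma trace_conj_eq {p : ℕ} (S A : Matrix (Fin p) (Fin p) ℝ) (d : Fin p → ℝ)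
    (hd : ∀ i, d i ≠ 0) :
    Matrix.trace ((Matrix.diagonal d)⁻¹ * S * (Matrix.diagonal d)⁻¹ *
      (Matrix.diagonal d * A * Matrix.diagonal d)) = Matrix.trace (S * A) := by
  set W := Matrix.diagonal d with hW
  have hdet : IsUnit W.det := diag_det_unit d hd
  have h1 : W⁻¹ * S * W⁻¹ * (W * A * W) = W⁻¹ * (S * (A * W)) := by
    simp only [Matrix.mul_assoc, Matrix.nonsing_inv_mul_cancel_left _ _ hdet]
  rw [h1, Matrix.trace_mul_comm]
  simp only [Matrix.mul_assoc]
  rw [Matrix.mul_nonsing_inv _ hdet]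
  simp

lemma log_det_conj {p : ℕ} (A : Matrix (Fin p) (Fin p) ℝ) (d : Fin p → ℝ)
    (hd : ∀ i, d i ≠ 0) (hA : 0 < A.det) :
    Real.log (Matrix.diagonal d * A * Matrix.diagonal d).det
      = Real.log A.det + Real.log ((Matrix.diagonal d).det ^ 2) := by
  have hW : (Matrix.diagonal d).det ≠ 0 := (diag_det_unit d hd).ne_zero
  have h1 : (Matrix.diagonal d * A * Matrix.diagonal d).det
      = A.det * (Matrix.diagonal d).det ^ 2 := by
    rw [Matrix.det_mul, Matrix.det_mul]; ring
  rw [h1, Real.log_mul hA.ne' (pow_ne_zero 2 hW)]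

lemma l1_offdiag_conj {p : ℕ} (A : Matrix (Fin p) (Fin p) ℝ) (d : Fin p → ℝ)
    (hd : ∀ i, 0 < d i) :
    l1Norm (offDiagPart (Matrix.diagonal d * A * Matrix.diagonal d))
      = ∑ i, ∑ j, (if i = j then 0 else d i * d j * |A i j|) := by
  unfold l1Norm offDiagPart diagPart
  refine Finset.sum_congr rfl fun i _ => Finset.sum_congr rfl fun j _ => ?_
  by_cases hij : i = j
  · subst hij
    simp [Matrix.sub_apply, Matrix.diagonal_apply_eq]
  · simp only [Matrix.sub_apply, Matrix.diagonal_apply_ne _ hij, sub_zero,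
      Matrix.diagonal_mul, Matrix.mul_diagonal, if_neg hij]
    rw [abs_mul, abs_mul, abs_of_pos (hd i), abs_of_pos (hd j)]
    ring

lemma l1_offdiag_conj_sub {p : ℕ} (A B : Matrix (Fin p) (Fin p) ℝ) (d e : Fin p → ℝ)
    (hd : ∀ i, 0 < d i) (he : ∀ i, 0 < e i) :
    l1Norm (offDiagPart (Matrix.diagonal d * A * Matrix.diagonal d)
        - offDiagPart (Matrix.diagonal e * B * Matrix.diagonal e))
      = ∑ i, ∑ j, (if i = j then 0 else |d i * d j * A i j - e i * e j * B i j|) := by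
  unfold l1Norm offDiagPart diagPart
  refine Finset.sum_congr rfl fun i _ => Finset.sum_congr rfl fun j _ => ?_
  by_cases hij : i = j
  · subst hij
    simp [Matrix.sub_apply, Matrix.diagonal_apply_eq]
  · simp only [Matrix.sub_apply, Matrix.diagonal_apply_ne _ hij, sub_zero,
      Matrix.diagonal_mul, Matrix.mul_diagonal, if_neg hij]
    congr 1
    ring

/-- Key identity: the FGL objective at the conjugated point equals the weighted
objective minus a constant. -/
lemma objFGL_conj_eq {p : ℕ} (Shat : Fin 2 → Matrix (Fin p) (Fin p) ℝ)
    (w : Fin 2 → Fin p → ℝ) (hw : ∀ k i, 0 < w k i) (lam rho : ℝ)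
    (Θ : Fin 2 → Matrix (Fin p) (Fin p) ℝ) (hΘ : ∀ k, 0 < (Θ k).det) :
    objFGL (fun k => (Matrix.diagonal (w k))⁻¹ * Shat k * (Matrix.diagonal (w k))⁻¹)
        lam rho (fun k => Matrix.diagonal (w k) * Θ k * Matrix.diagonal (w k))
      = objWFGL Shat w lam rho Θ
        - ∑ k, Real.log ((Matrix.diagonal (w k)).det ^ 2) := by
  have hd : ∀ k i, w k i ≠ 0 := fun k i => (hw k i).ne'
  have ht : ∀ k, Matrix.trace ((Matrix.diagonal (w k))⁻¹ * Shat k * (Matrix.diagonal (w k))⁻¹ *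
      (Matrix.diagonal (w k) * Θ k * Matrix.diagonal (w k))) = Matrix.trace (Shat k * Θ k) :=
    fun k => trace_conj_eq (Shat k) (Θ k) (w k) (hd k)
  have hl : ∀ k, Real.log (Matrix.diagonal (w k) * Θ k * Matrix.diagonal (w k)).det
      = Real.log (Θ k).det + Real.log ((Matrix.diagonal (w k)).det ^ 2) :=
    fun k => log_det_conj (Θ k) (w k) (hd k) (hΘ k)
  have h4 : ∀ k, l1Norm (offDiagPart (Matrix.diagonal (w k) * Θ k * Matrix.diagonal (w k)))
      = ∑ i, ∑ j, (if i = j then 0 else w k i * w k j * |Θ k i j|) :=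
    fun k => l1_offdiag_conj (Θ k) (w k) (hw k)
  have h5 : l1Norm (offDiagPart (Matrix.diagonal (w 0) * Θ 0 * Matrix.diagonal (w 0))
        - offDiagPart (Matrix.diagonal (w 1) * Θ 1 * Matrix.diagonal (w 1)))
      = ∑ i, ∑ j, (if i = j then 0 else |w 0 i * w 0 j * Θ 0 i j - w 1 i * w 1 j * Θ 1 i j|) :=
    l1_offdiag_conj_sub (Θ 0) (Θ 1) (w 0) (w 1) (hw 0) (hw 1)
  simp only [objFGL, objWFGL, Fin.sum_univ_two,
    show ¬(0 : Fin 2) < 0 from by decide, show (0 : Fin 2) < 1 from by decide,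
    show ¬(1 : Fin 2) < 0 from by decide, show ¬(1 : Fin 2) < 1 from by decide,
    if_true, if_false]
  rw [ht 0, ht 1, hl 0, hl 1, h4 0, h4 1, h5]
  ring

/-- With `W_k` diagonal with positive diagonal entries `w k` and
`R̂⁽ᵏ⁾ = W_k⁻¹ Σ̂⁽ᵏ⁾ W_k⁻¹`, a pair `(Θ₁,Θ₂)` of symmetric positive definite matrices
minimizes the weighted fused graphical lasso objective iff `(W₁Θ₁W₁, W₂Θ₂W₂)` minimizes
the (unweighted) fused graphical lasso objective built from the `R̂⁽ᵏ⁾`; in particular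
the minimizers are related by `Θ̂_R⁽ᵏ⁾ = W_k Θ̂_w⁽ᵏ⁾ W_k`. -/
theorem weighted_FGL_equivalence
    (p : ℕ) (Shat : Fin 2 → Matrix (Fin p) (Fin p) ℝ) (hS : ∀ k, (Shat k).IsSymm)
    (w : Fin 2 → Fin p → ℝ) (hw : ∀ k i, 0 < w k i)
    (lam rho : ℝ) (hlam : 0 ≤ lam) (hrho : 0 ≤ rho)
    (Θ : Fin 2 → Matrix (Fin p) (Fin p) ℝ) (hΘ : ∀ k, (Θ k).PosDef) :
    (∀ Ψ : Fin 2 → Matrix (Fin p) (Fin p) ℝ, (∀ k, (Ψ k).PosDef) →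
        objWFGL Shat w lam rho Θ ≤ objWFGL Shat w lam rho Ψ) ↔
    (∀ Ψ : Fin 2 → Matrix (Fin p) (Fin p) ℝ, (∀ k, (Ψ k).PosDef) →
        objFGL (fun k => (Matrix.diagonal (w k))⁻¹ * Shat k * (Matrix.diagonal (w k))⁻¹)
            lam rho (fun k => Matrix.diagonal (w k) * Θ k * Matrix.diagonal (w k))
          ≤ objFGL (fun k => (Matrix.diagonal (w k))⁻¹ * Shat k * (Matrix.diagonal (w k))⁻¹)
              lam rho Ψ) := by
  have hd : ∀ k i, w k i ≠ 0 := fun k i => (hw k i).ne'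
  have hdet : ∀ k, IsUnit (Matrix.diagonal (w k)).det := fun k => diag_det_unit (w k) (hd k)
  have hinv : ∀ k, (Matrix.diagonal (w k))⁻¹ = Matrix.diagonal (fun i => (w k i)⁻¹) := by
    intro k
    apply Matrix.inv_eq_right_inv
    rw [Matrix.diagonal_mul_diagonal]
    simp [mul_inv_cancel₀ (hd k _)]
  set C := ∑ k, Real.log ((Matrix.diagonal (w k)).det ^ 2) with hC
  constructor
  · intro hmin Ψ hΨ
    set Φ : Fin 2 → Matrix (Fin p) (Fin p) ℝ :=
      fun k => (Matrix.diagonal (w k))⁻¹ * Ψ k * (Matrix.diagonal (w k))⁻¹ with hΦ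
    have hΦpd : ∀ k, (Φ k).PosDef := by
      intro k
      show ((Matrix.diagonal (w k))⁻¹ * Ψ k * (Matrix.diagonal (w k))⁻¹).PosDef
      rw [hinv k]
      exact posDef_diag_conj (hΨ k) _ (fun i => inv_ne_zero (hd k i))
    have hkey : (fun k => Matrix.diagonal (w k) * Φ k * Matrix.diagonal (w k)) = Ψ := by
      funext k
      simp only [hΦ]
      rw [Matrix.mul_assoc ((Matrix.diagonal (w k))⁻¹) (Ψ k),
        Matrix.mul_nonsing_inv_cancel_left _ _ (hdet k),
        Matrix.nonsing_inv_mul_cancel_right _ _ (hdet k)]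
    have e1 := objFGL_conj_eq Shat w hw lam rho Θ (fun k => (hΘ k).det_pos)
    have e2 := objFGL_conj_eq Shat w hw lam rho Φ (fun k => (hΦpd k).det_pos)
    rw [hkey] at e2
    rw [e1, e2]
    have := hmin Φ hΦpd
    linarith
  · intro hmin Ψ hΨ
    have hΨ' : ∀ k, (Matrix.diagonal (w k) * Ψ k * Matrix.diagonal (w k)).PosDef :=
      fun k => posDef_diag_conj (hΨ k) _ (hd k)
    have h1 := hmin (fun k => Matrix.diagonal (w k) * Ψ k * Matrix.diagonal (w k)) hΨ'
    rw [objFGL_conj_eq Shat w hw lam rho Θ (fun k => (hΘ k).det_pos),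
      objFGL_conj_eq Shat w hw lam rho Ψ (fun k => (hΨ k).det_pos)] at h1
    linarith
end
end
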